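/- arXiv:1506.09145 — 2 statements merged into one kernel-verified Lean document; each statement's English description precedes it below -/
import Mathlib

section
/- In any 3-track layout of a graph, for any cycle C with a cyclic orientation, the sum of δ over the arcs of C equals 0 if C has even length, and has absolute value 3 if C has odd length. Here δ(uv) = +1 if the arc uv goes from track i to track i+1 (mod 3), and δ(uv) = -1 otherwise. -/
open SimpleGraph

universe u

variable {V : Type u}

/-- A `k`-track layout of a graph `G`: a partition of the vertices into `k`
linearly ordered independent sets (tracks, with order given by `pos`),
such that the edges between each pair of tracks are non-crossing. -/
structure TrackLayout (G : SimpleGraph V) (k : ℕ) where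
  track : V → Fin k
  pos : V → ℕ
  pos_inj : ∀ u v : V, track u = track v → pos u = pos v → u = v
  indep : ∀ u v : V, G.Adj u v → track u ≠ track v
  noncross : ∀ u v u' v' : V, G.Adj u v → G.Adj u' v' →
    track u = track u' → track v = track v' →
    pos u < pos u' → ¬ (pos v' < pos v)

/-- The track-number of `G`: the minimum `k` such that `G` has a `k`-track layout. -/
noncomputable def trackNumber (G : SimpleGraph V) : ℕ :=
  sInf {k | Nonempty (TrackLayout G k)}

/-- `δ` of an arc `uv` in a 3-track layout: `+1` if it goes from track `i` to
track `i+1 (mod 3)`, and `-1` otherwise. -/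
def trackDelta {G : SimpleGraph V} (T : TrackLayout G 3) (u v : V) : ℤ :=
  if T.track v = T.track u + 1 then 1 else -1

/-- Sum of `δ` over the arcs of a walk in a 3-track layout. -/
def walkDelta {G : SimpleGraph V} (T : TrackLayout G 3) :
    ∀ {u v : V}, G.Walk u v → ℤ
  | _, _, SimpleGraph.Walk.nil => 0
  | _, _, @SimpleGraph.Walk.cons _ _ a b _ _ p => trackDelta T a b + walkDelta T p

/-- A leveled planar drawing of `G` (combinatorially): vertices assigned to
levels with every edge joining consecutive levels, and vertices linearly
ordered within each level (by `pos`) so that no two edges cross. -/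
structure LeveledPlanarDrawing (G : SimpleGraph V) where
  level : V → ℤ
  pos : V → ℕ
  pos_inj : ∀ u v : V, level u = level v → pos u = pos v → u = v
  edge_level : ∀ u v : V, G.Adj u v → |level u - level v| = 1
  noncross : ∀ u v u' v' : V, G.Adj u v → G.Adj u' v' →
    level u = level u' → level v = level v' →
    pos u < pos u' → ¬ (pos v' < pos v)

/-- A graph is leveled planar if it admits a leveled planar drawing. -/
def IsLeveledPlanar (G : SimpleGraph V) : Prop := Nonempty (LeveledPlanarDrawing G)

/-- A weakly leveled planar drawing of `G`: like a leveled planar drawing,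
but edges may also join two consecutive vertices of the same level. -/
structure WeaklyLeveledPlanarDrawing (G : SimpleGraph V) where
  level : V → ℤ
  pos : V → ℕ
  pos_inj : ∀ u v : V, level u = level v → pos u = pos v → u = v
  edge_level : ∀ u v : V, G.Adj u v → |level u - level v| ≤ 1
  noncross : ∀ u v u' v' : V, G.Adj u v → G.Adj u' v' →
    level u = level u' → level v = level v' → level u ≠ level v →
    pos u < pos u' → ¬ (pos v' < pos v)
  same_level_consecutive : ∀ u v : V, G.Adj u v → level u = level v → pos u < pos v →
    ∀ w : V, level w = level u → ¬ (pos u < pos w ∧ pos w < pos v)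

/-- A path decomposition of `G`: a sequence of bags such that every vertex lies in a
nonempty contiguous subsequence of bags and every edge lies in some bag. -/
structure PathDecomp (G : SimpleGraph V) where
  bags : ℕ → Set V
  mem_bag : ∀ v : V, ∃ i, v ∈ bags i
  contiguous : ∀ (v : V) (i j k : ℕ), i ≤ j → j ≤ k → v ∈ bags i → v ∈ bags k → v ∈ bags j
  edge_bag : ∀ u v : V, G.Adj u v → ∃ i, u ∈ bags i ∧ v ∈ bags i

/-- A layering of `G`: each edge joins vertices in the same or consecutive layers. -/
def IsLayering (G : SimpleGraph V) (lev : V → ℤ) : Prop :=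
  ∀ u v : V, G.Adj u v → |lev u - lev v| ≤ 1

/-- `G` has layered pathwidth at most `k`: some path decomposition and layering
where every bag meets every layer in at most `k` vertices. -/
def LayeredPathwidthLE (G : SimpleGraph V) (k : ℕ) : Prop :=
  ∃ (P : PathDecomp G) (lev : V → ℤ), IsLayering G lev ∧
    ∀ (i : ℕ) (l : ℤ), {v | v ∈ P.bags i ∧ lev v = l}.ncard ≤ k

noncomputable def layeredPathwidth (G : SimpleGraph V) : ℕ :=
  sInf {k | LayeredPathwidthLE G k}

/-- `G` has pathwidth at most `k`: some path decomposition with all bags of size at most `k+1`. -/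
def PathwidthLE (G : SimpleGraph V) (k : ℕ) : Prop :=
  ∃ P : PathDecomp G, ∀ i, (P.bags i).ncard ≤ k + 1

noncomputable def pathwidth (G : SimpleGraph V) : ℕ :=
  sInf {k | PathwidthLE G k}

/-- A tree decomposition of `G`. -/
structure TreeDecomp (G : SimpleGraph V) where
  ι : Type u
  T : SimpleGraph ι
  isTree : T.IsTree
  bags : ι → Set V
  edge_bag : ∀ u v : V, G.Adj u v → ∃ i, u ∈ bags i ∧ v ∈ bags i
  subtree : ∀ v : V, (T.induce {i | v ∈ bags i}).Connected

/-- `G` has layered treewidth at most `k`. -/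
def LayeredTreewidthLE (G : SimpleGraph V) (k : ℕ) : Prop :=
  ∃ (D : TreeDecomp G) (lev : V → ℤ), IsLayering G lev ∧
    ∀ (i : D.ι) (l : ℤ), {v | v ∈ D.bags i ∧ lev v = l}.ncard ≤ k

/-- `G` has tree-depth at most `d`: the vertices embed injectively into a rooted forest
(nodes = nonempty lists, ancestor = prefix) of height at most `d`, with every edge
joining an ancestor-descendant pair. -/
def TreedepthLE (G : SimpleGraph V) (d : ℕ) : Prop :=
  ∃ f : V → List ℕ, Function.Injective f ∧
    (∀ v : V, f v ≠ [] ∧ (f v).length ≤ d) ∧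
    ∀ u v : V, G.Adj u v → ((f u <+: f v) ∨ (f v <+: f u))

noncomputable def treedepth (G : SimpleGraph V) : ℕ :=
  sInf {d | TreedepthLE G d}

/-- A caterpillar: a tree having a path (the spine) containing all non-leaf vertices. -/
def IsCaterpillar (G : SimpleGraph V) : Prop :=
  G.IsTree ∧ ∃ (n : ℕ) (f : ℕ → V),
    (∀ i, i < n → G.Adj (f i) (f (i+1))) ∧
    (∀ i j, i ≤ n → j ≤ n → f i = f j → i = j) ∧
    ∀ v : V, (∃ a b : V, a ≠ b ∧ G.Adj v a ∧ G.Adj v b) → ∃ i, i ≤ n ∧ f i = v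

/-- The subgraph of edges between tracks `a` and `b` of a track layout. -/
def betweenTracks (G : SimpleGraph V) {k : ℕ} (T : TrackLayout G k) (a b : Fin k) :
    SimpleGraph V where
  Adj u v := G.Adj u v ∧
    ((T.track u = a ∧ T.track v = b) ∨ (T.track u = b ∧ T.track v = a))
  symm := by
    constructor
    intro u v h
    exact ⟨h.1.symm, by tauto⟩
  loopless := by
    constructor
    intro u h
    exact G.irrefl h.1

/-- Outerplanarity, via one-page book embeddings: the vertices can be linearly
ordered so that no two edges cross. -/
def IsOuterplanar (G : SimpleGraph V) : Prop :=
  ∃ f : V → ℕ, Function.Injective f ∧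
    ∀ u v x y : V, G.Adj u v → G.Adj x y →
      ¬ (f u < f x ∧ f x < f v ∧ f v < f y)

/-- The complete binary tree of height `h`: vertices are binary strings of length
at most `h`, with edges from each string to its one-letter extensions. -/
def completeBinaryTree (h : ℕ) : SimpleGraph {l : List Bool // l.length ≤ h} where
  Adj u v := (∃ b, (v : List Bool) = (u : List Bool) ++ [b]) ∨
    (∃ b, (u : List Bool) = (v : List Bool) ++ [b])
  symm := by constructor; intro u v h'; tauto
  loopless := by
    constructor
    intro u h'
    rcases h' with ⟨b, hb⟩ | ⟨b, hb⟩ <;>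
      · have := congrArg List.length hb
        simp at this

/-- Add an apex (universal vertex `none`) to a graph. -/
def apexGraph {α : Type u} (G : SimpleGraph α) : SimpleGraph (Option α) where
  Adj u v :=
    (∃ a b, u = some a ∧ v = some b ∧ G.Adj a b) ∨
    (u = none ∧ ∃ b, v = some b) ∨
    (v = none ∧ ∃ a, u = some a)
  symm := by
    constructor
    rintro u v (⟨a, b, rfl, rfl, hab⟩ | ⟨rfl, b, rfl⟩ | ⟨h1, a, rfl⟩)
    · exact Or.inl ⟨b, a, rfl, rfl, hab.symm⟩
    · exact Or.inr (Or.inr ⟨rfl, b, rfl⟩)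
    · subst h1; exact Or.inr (Or.inl ⟨rfl, a, rfl⟩)
  loopless := by
    constructor
    rintro u (⟨a, b, h1, h2, hab⟩ | ⟨h1, b, h2⟩ | ⟨h1, a, h2⟩)
    · rw [h1] at h2; cases h2; exact G.irrefl hab
    · rw [h1] at h2; cases h2
    · rw [h2] at h1; cases h1


namespace TrackProof
open Finset



def ind (P : Prop) [Decidable P] : ZMod 2 := if P then 1 else 0

lemma ind_congr {P Q : Prop} [Decidable P] [Decidable Q] (h : P ↔ Q) : ind P = ind Q := by
  by_cases hP : P
  · rw [ind, if_pos hP, ind, if_pos (h.mp hP)]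
  · rw [ind, if_neg hP, ind, if_neg (fun hQ => hP (h.mpr hQ))]

lemma ind_and (P Q : Prop) [Decidable P] [Decidable Q] : ind (P ∧ Q) = ind P * ind Q := by
  by_cases hP : P <;> by_cases hQ : Q <;> simp [ind, hP, hQ]

def opp (a b c d : ℕ) : Prop := (a < b ∧ d < c) ∨ (b < a ∧ c < d)

instance {a b c d : ℕ} : Decidable (opp a b c d) := by unfold opp; infer_instance

variable {V : Type*} (tr : V → Fin 3) (pos : V → ℕ)

/-- crossing indicator of arcs (u,v) and (x,y) -/
def XX (u v x y : V) : ZMod 2 :=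
  ind (tr u = tr x ∧ tr v = tr y ∧ opp (pos u) (pos x) (pos v) (pos y))
  + ind (tr u = tr y ∧ tr v = tr x ∧ opp (pos u) (pos y) (pos v) (pos x))

def NN (u v x y : V) : ZMod 2 :=
  ind ((tr u = tr x ∧ tr v = tr y) ∧ pos u < pos x)
  + ind ((tr u = tr y ∧ tr v = tr x) ∧ pos u < pos y)
  + ind ((tr v = tr x ∧ tr u = tr y) ∧ pos v < pos x)
  + ind ((tr v = tr y ∧ tr u = tr x) ∧ pos v < pos y)

lemma opp_ind {a b c d : ℕ} (hab : a ≠ b) (hcd : c ≠ d) :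
    ind (opp a b c d) = ind (a < b) + ind (c < d) := by
  rcases lt_or_gt_of_ne hab with h1 | h1 <;> rcases lt_or_gt_of_ne hcd with h2 | h2 <;>
    simp [ind, opp, h1, h2, asymm h1, asymm h2, le_of_lt, not_lt_of_gt] <;> decide

lemma XX_eq_NN (u v x y : V)
    (huv : tr u ≠ tr v) (hxy : tr x ≠ tr y)
    (h1 : tr u = tr x → pos u ≠ pos x) (h2 : tr u = tr y → pos u ≠ pos y)
    (h3 : tr v = tr x → pos v ≠ pos x) (h4 : tr v = tr y → pos v ≠ pos y) :
    XX tr pos u v x y = NN tr pos u v x y := by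
  by_cases hA : tr u = tr x ∧ tr v = tr y
  · have hB : ¬ (tr u = tr y ∧ tr v = tr x) := by
      rintro ⟨b1, b2⟩; exact hxy (hA.1 ▸ b1 ▸ rfl)
    have hBs : ¬ (tr v = tr x ∧ tr u = tr y) := fun h => hB ⟨h.2, h.1⟩
    rw [XX, NN, ind_congr (show (tr u = tr y ∧ tr v = tr x ∧ opp (pos u) (pos y) (pos v) (pos x)) ↔ False by
        constructor
        · rintro ⟨b1, b2, _⟩; exact hB ⟨b1, b2⟩
        · exact False.elim),
      ind_congr (show ((tr u = tr y ∧ tr v = tr x) ∧ pos u < pos y) ↔ False by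
        constructor
        · rintro ⟨b, _⟩; exact hB b
        · exact False.elim),
      ind_congr (show ((tr v = tr x ∧ tr u = tr y) ∧ pos v < pos x) ↔ False by
        constructor
        · rintro ⟨b, _⟩; exact hBs b
        · exact False.elim)]
    have e1 : ind (tr u = tr x ∧ tr v = tr y ∧ opp (pos u) (pos x) (pos v) (pos y))
        = ind (opp (pos u) (pos x) (pos v) (pos y)) := by
      apply ind_congr; simp [hA.1, hA.2]
    have e2 : ind ((tr u = tr x ∧ tr v = tr y) ∧ pos u < pos x) = ind (pos u < pos x) := by
      apply ind_congr; simp [hA.1, hA.2]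
    have e3 : ind ((tr v = tr y ∧ tr u = tr x) ∧ pos v < pos y) = ind (pos v < pos y) := by
      apply ind_congr; simp [hA.1, hA.2]
    rw [e1, e2, e3, opp_ind (h1 hA.1) (h4 hA.2)]
    simp [ind]
  · by_cases hB : tr u = tr y ∧ tr v = tr x
    · have hAs : ¬ (tr v = tr y ∧ tr u = tr x) := fun h => hA ⟨h.2, h.1⟩
      rw [XX, NN, ind_congr (show (tr u = tr x ∧ tr v = tr y ∧ opp (pos u) (pos x) (pos v) (pos y)) ↔ False by
          constructor
          · rintro ⟨b1, b2, _⟩; exact hA ⟨b1, b2⟩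
          · exact False.elim),
        ind_congr (show ((tr u = tr x ∧ tr v = tr y) ∧ pos u < pos x) ↔ False by
          constructor
          · rintro ⟨b, _⟩; exact hA b
          · exact False.elim),
        ind_congr (show ((tr v = tr y ∧ tr u = tr x) ∧ pos v < pos y) ↔ False by
          constructor
          · rintro ⟨b, _⟩; exact hAs b
          · exact False.elim)]
      have e1 : ind (tr u = tr y ∧ tr v = tr x ∧ opp (pos u) (pos y) (pos v) (pos x))
          = ind (opp (pos u) (pos y) (pos v) (pos x)) := by
        apply ind_congr; simp [hB.1, hB.2]
      have e2 : ind ((tr u = tr y ∧ tr v = tr x) ∧ pos u < pos y) = ind (pos u < pos y) := by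
        apply ind_congr; simp [hB.1, hB.2]
      have e3 : ind ((tr v = tr x ∧ tr u = tr y) ∧ pos v < pos x) = ind (pos v < pos x) := by
        apply ind_congr; simp [hB.1, hB.2]
      rw [e1, e2, e3, opp_ind (h2 hB.1) (h3 hB.2)]
      simp [ind]
    · have hAs : ¬ (tr v = tr y ∧ tr u = tr x) := fun h => hA ⟨h.2, h.1⟩
      have hBs : ¬ (tr v = tr x ∧ tr u = tr y) := fun h => hB ⟨h.2, h.1⟩
      rw [XX, NN]
      rw [ind_congr (show (tr u = tr x ∧ tr v = tr y ∧ opp (pos u) (pos x) (pos v) (pos y)) ↔ False by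
          constructor
          · rintro ⟨b1, b2, _⟩; exact hA ⟨b1, b2⟩
          · exact False.elim),
        ind_congr (show (tr u = tr y ∧ tr v = tr x ∧ opp (pos u) (pos y) (pos v) (pos x)) ↔ False by
          constructor
          · rintro ⟨b1, b2, _⟩; exact hB ⟨b1, b2⟩
          · exact False.elim),
        ind_congr (show ((tr u = tr x ∧ tr v = tr y) ∧ pos u < pos x) ↔ False by
          constructor
          · rintro ⟨b, _⟩; exact hA b
          · exact False.elim),
        ind_congr (show ((tr u = tr y ∧ tr v = tr x) ∧ pos u < pos y) ↔ False by
          constructor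
          · rintro ⟨b, _⟩; exact hB b
          · exact False.elim),
        ind_congr (show ((tr v = tr x ∧ tr u = tr y) ∧ pos v < pos x) ↔ False by
          constructor
          · rintro ⟨b, _⟩; exact hBs b
          · exact False.elim),
        ind_congr (show ((tr v = tr y ∧ tr u = tr x) ∧ pos v < pos y) ↔ False by
          constructor
          · rintro ⟨b, _⟩; exact hAs b
          · exact False.elim)]
      simp [ind]

lemma even4 : ∀ (z p1 p2 q1 q2 : Fin 3), p1 ≠ z → p2 ≠ z → q1 ≠ z → q2 ≠ z →
    ind (p1 = q1) + ind (p1 = q2) + ind (p2 = q1) + ind (p2 = q2) = 0 := by decide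

lemma shift_sum (n : ℕ) (g : ℕ → ZMod 2) (hg : ∀ i, g (i + n) = g i) :
    ∑ i ∈ range n, g (i + 1) = ∑ i ∈ range n, g i := by
  have h1 : ∑ i ∈ range (n + 1), g i = (∑ i ∈ range n, g (i + 1)) + g 0 :=
    Finset.sum_range_succ' g n
  have h2 : ∑ i ∈ range (n + 1), g i = (∑ i ∈ range n, g i) + g n :=
    Finset.sum_range_succ g n
  have h3 : g n = g 0 := by simpa using hg 0
  rw [h3] at h2
  exact add_right_cancel (h1.symm.trans h2)




lemma alt_le_one (key : ℕ → ℕ) (dv : ℕ → ℤ) (S : Finset ℕ) :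
    (∀ k ∈ S, dv k = 1 ∨ dv k = -1) →
    (∀ k ∈ S, ∀ l ∈ S, key k = key l → k = l) →
    (∀ k ∈ S, ∀ l ∈ S, k ≠ l → dv k = dv l → key k < key l →
        ∃ m ∈ S, key k < key m ∧ key m < key l) →
    |∑ k ∈ S, dv k| ≤ 1 := by
  induction S using Finset.strongInduction with
  | _ S ih =>
    intro hpm hinj halt
    rcases S.eq_empty_or_nonempty with rfl | hne
    · simp
    obtain ⟨x, hx, hxmax⟩ := S.exists_max_image key hne
    rcases (S.erase x).eq_empty_or_nonempty with he | hne2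
    · have hS : S = {x} := by
        apply Finset.eq_singleton_iff_unique_mem.mpr
        refine ⟨hx, fun y hy => ?_⟩
        by_contra hyx
        exact Finset.notMem_empty y (he ▸ Finset.mem_erase.mpr ⟨hyx, hy⟩)
      rw [hS, Finset.sum_singleton]
      rcases hpm x hx with h | h <;> rw [h] <;> decide
    obtain ⟨y, hy, hymax⟩ := (S.erase x).exists_max_image key hne2
    have hyS : y ∈ S := Finset.mem_of_mem_erase hy
    have hxy : y ≠ x := Finset.ne_of_mem_erase hy
    have hkyx : key y < key x :=
      lt_of_le_of_ne (hxmax y hyS) (fun h => hxy (hinj y hyS x hx h))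
    have hdxy : dv y = - dv x := by
      by_contra hne3
      have same : dv y = dv x := by
        rcases hpm x hx with h | h <;> rcases hpm y hyS with h' | h' <;> omega
      obtain ⟨mm, hm, h1, h2⟩ := halt y hyS x hx hxy same hkyx
      have hmx : mm ≠ x := fun h => by subst h; exact lt_irrefl _ h2
      have := hymax mm (Finset.mem_erase.mpr ⟨hmx, hm⟩)
      omega
    have hsum : ∑ k ∈ S, dv k = ∑ k ∈ (S.erase x).erase y, dv k := by
      rw [← Finset.add_sum_erase S dv hx, ← Finset.add_sum_erase _ dv hy, hdxy]
      ring
    rw [hsum]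
    have hsub : (S.erase x).erase y ⊂ S :=
      lt_of_le_of_lt (Finset.erase_subset _ _) (Finset.erase_ssubset hx)
    refine ih _ hsub (fun k hk => hpm k (Finset.mem_of_mem_erase (Finset.mem_of_mem_erase hk)))
      (fun k hk l hl h => hinj k (Finset.mem_of_mem_erase (Finset.mem_of_mem_erase hk)) l
        (Finset.mem_of_mem_erase (Finset.mem_of_mem_erase hl)) h) ?_
    intro k hk l hl hkl hd hkey
    have hkS : k ∈ S := Finset.mem_of_mem_erase (Finset.mem_of_mem_erase hk)
    have hlS : l ∈ S := Finset.mem_of_mem_erase (Finset.mem_of_mem_erase hl)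
    obtain ⟨mm, hm, h1, h2⟩ := halt k hkS l hlS hkl hd hkey
    have hly : l ≠ y := Finset.ne_of_mem_erase hl
    have hlx : l ≠ x := Finset.ne_of_mem_erase (Finset.mem_of_mem_erase hl)
    have hkly : key l < key y :=
      lt_of_le_of_ne (hymax l (Finset.mem_erase.mpr ⟨hlx, hlS⟩))
        (fun h => hly (hinj l hlS y hyS h))
    have hmy : mm ≠ y := fun h => by subst h; omega
    have hmx : mm ≠ x := fun h => by subst h; have := hkly.trans hkyx; omega
    exact ⟨mm, Finset.mem_erase.mpr ⟨hmy, Finset.mem_erase.mpr ⟨hmx, hm⟩⟩, h1, h2⟩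


lemma parity_NN (n m : ℕ) (hn : 1 ≤ n) (hm : 1 ≤ m) (c d : ℕ → V)
    (hc : ∀ i, c (i + n) = c i) (hd : ∀ j, d (j + m) = d j)
    (htc : ∀ i, tr (c i) ≠ tr (c (i+1))) (htd : ∀ j, tr (d j) ≠ tr (d (j+1))) :
    ∑ i ∈ range n, ∑ j ∈ range m, NN tr pos (c i) (c (i+1)) (d j) (d (j+1)) = 0 := by
  -- abbreviations
  -- arithmetic facts
  have hm1 : ∀ j : ℕ, j + 1 + (m - 1) = j + m := fun j => by omega
  have hn1 : ∀ i : ℕ, i + 1 + (n - 1) = i + n := fun i => by omega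
  -- the four shifted summand families
  set T1 : ℕ → ℕ → ZMod 2 := fun i j =>
    ind ((tr (c i) = tr (d j) ∧ tr (c (i+1)) = tr (d (j+1))) ∧ pos (c i) < pos (d j)) with hT1
  set T2 : ℕ → ℕ → ZMod 2 := fun i j =>
    ind ((tr (c i) = tr (d j) ∧ tr (c (i+1)) = tr (d (j+(m-1)))) ∧ pos (c i) < pos (d j)) with hT2
  set T3 : ℕ → ℕ → ZMod 2 := fun i j =>
    ind ((tr (c i) = tr (d j) ∧ tr (c (i+(n-1))) = tr (d (j+1))) ∧ pos (c i) < pos (d j)) with hT3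
  set T4 : ℕ → ℕ → ZMod 2 := fun i j =>
    ind ((tr (c i) = tr (d j) ∧ tr (c (i+(n-1))) = tr (d (j+(m-1)))) ∧ pos (c i) < pos (d j)) with hT4
  -- Step A : rewrite the sum of NN as sum of shifted families
  have step1 : ∑ i ∈ range n, ∑ j ∈ range m, NN tr pos (c i) (c (i+1)) (d j) (d (j+1))
      = (∑ i ∈ range n, ∑ j ∈ range m, T1 i j) + (∑ i ∈ range n, ∑ j ∈ range m, T2 i j)
        + (∑ i ∈ range n, ∑ j ∈ range m, T3 i j) + (∑ i ∈ range n, ∑ j ∈ range m, T4 i j) := by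
    have expand : ∀ i j, NN tr pos (c i) (c (i+1)) (d j) (d (j+1)) =
        ind ((tr (c i) = tr (d j) ∧ tr (c (i+1)) = tr (d (j+1))) ∧ pos (c i) < pos (d j))
        + ind ((tr (c i) = tr (d (j+1)) ∧ tr (c (i+1)) = tr (d j)) ∧ pos (c i) < pos (d (j+1)))
        + ind ((tr (c (i+1)) = tr (d j) ∧ tr (c i) = tr (d (j+1))) ∧ pos (c (i+1)) < pos (d j))
        + ind ((tr (c (i+1)) = tr (d (j+1)) ∧ tr (c i) = tr (d j)) ∧ pos (c (i+1)) < pos (d (j+1))) := by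
      intro i j; rfl
    -- sum for the 2nd family : shift j
    have s2 : ∀ i, ∑ j ∈ range m,
        ind ((tr (c i) = tr (d (j+1)) ∧ tr (c (i+1)) = tr (d j)) ∧ pos (c i) < pos (d (j+1)))
        = ∑ j ∈ range m, T2 i j := by
      intro i
      have := shift_sum m (fun j => T2 i j) (fun j => by
        simp only [hT2]
        apply ind_congr
        rw [show j + m + (m-1) = j + (m-1) + m by omega, hd, hd])
      rw [← this]
      apply Finset.sum_congr rfl
      intro j _
      simp only [hT2]
      apply ind_congr
      rw [hm1 j, hd j]
    -- 3rd family : shift i (after commuting sums)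
    have s3 : ∑ i ∈ range n, ∑ j ∈ range m,
        ind ((tr (c (i+1)) = tr (d j) ∧ tr (c i) = tr (d (j+1))) ∧ pos (c (i+1)) < pos (d j))
        = ∑ i ∈ range n, ∑ j ∈ range m, T3 i j := by
      rw [Finset.sum_comm]
      rw [show ∑ i ∈ range n, ∑ j ∈ range m, T3 i j = ∑ j ∈ range m, ∑ i ∈ range n, T3 i j from Finset.sum_comm]
      apply Finset.sum_congr rfl
      intro j _
      have := shift_sum n (fun i => T3 i j) (fun i => by
        simp only [hT3]
        apply ind_congr
        rw [show i + n + (n-1) = i + (n-1) + n by omega, hc, hc])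
      rw [← this]
      apply Finset.sum_congr rfl
      intro i _
      simp only [hT3]
      apply ind_congr
      rw [hn1 i, hc i]
    -- 4th family : shift both
    have s4 : ∑ i ∈ range n, ∑ j ∈ range m,
        ind ((tr (c (i+1)) = tr (d (j+1)) ∧ tr (c i) = tr (d j)) ∧ pos (c (i+1)) < pos (d (j+1)))
        = ∑ i ∈ range n, ∑ j ∈ range m, T4 i j := by
      -- first shift j inside
      have inner : ∀ i, ∑ j ∈ range m,
          ind ((tr (c (i+1)) = tr (d (j+1)) ∧ tr (c i) = tr (d j)) ∧ pos (c (i+1)) < pos (d (j+1)))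
          = ∑ j ∈ range m,
          ind ((tr (c (i+1)) = tr (d j) ∧ tr (c i) = tr (d (j+(m-1)))) ∧ pos (c (i+1)) < pos (d j)) := by
        intro i
        have := shift_sum m (fun j =>
          ind ((tr (c (i+1)) = tr (d j) ∧ tr (c i) = tr (d (j+(m-1)))) ∧ pos (c (i+1)) < pos (d j)))
          (fun j => by
            apply ind_congr
            rw [show j + m + (m-1) = j + (m-1) + m by omega, hd, hd])
        rw [← this]
        apply Finset.sum_congr rfl
        intro j _
        apply ind_congr
        rw [hm1 j, hd j]
      rw [show (∑ i ∈ range n, ∑ j ∈ range m,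
          ind ((tr (c (i+1)) = tr (d (j+1)) ∧ tr (c i) = tr (d j)) ∧ pos (c (i+1)) < pos (d (j+1))))
          = ∑ i ∈ range n, ∑ j ∈ range m,
          ind ((tr (c (i+1)) = tr (d j) ∧ tr (c i) = tr (d (j+(m-1)))) ∧ pos (c (i+1)) < pos (d j))
          from Finset.sum_congr rfl (fun i _ => inner i)]
      -- then shift i
      rw [Finset.sum_comm]
      rw [show ∑ i ∈ range n, ∑ j ∈ range m, T4 i j = ∑ j ∈ range m, ∑ i ∈ range n, T4 i j from Finset.sum_comm]
      apply Finset.sum_congr rfl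
      intro j _
      have := shift_sum n (fun i => T4 i j) (fun i => by
        simp only [hT4]
        apply ind_congr
        rw [show i + n + (n-1) = i + (n-1) + n by omega, hc, hc])
      rw [← this]
      apply Finset.sum_congr rfl
      intro i _
      simp only [hT4]
      apply ind_congr
      rw [hn1 i, hc i]
    calc ∑ i ∈ range n, ∑ j ∈ range m, NN tr pos (c i) (c (i+1)) (d j) (d (j+1))
        = ∑ i ∈ range n, ((∑ j ∈ range m, T1 i j)
          + (∑ j ∈ range m, ind ((tr (c i) = tr (d (j+1)) ∧ tr (c (i+1)) = tr (d j)) ∧ pos (c i) < pos (d (j+1))))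
          + (∑ j ∈ range m, ind ((tr (c (i+1)) = tr (d j) ∧ tr (c i) = tr (d (j+1))) ∧ pos (c (i+1)) < pos (d j)))
          + (∑ j ∈ range m, ind ((tr (c (i+1)) = tr (d (j+1)) ∧ tr (c i) = tr (d j)) ∧ pos (c (i+1)) < pos (d (j+1))))) := by
          apply Finset.sum_congr rfl; intro i _
          rw [← Finset.sum_add_distrib, ← Finset.sum_add_distrib, ← Finset.sum_add_distrib]
          apply Finset.sum_congr rfl; intro j _
          exact expand i j
      _ = (∑ i ∈ range n, ∑ j ∈ range m, T1 i j)
          + (∑ i ∈ range n, ∑ j ∈ range m, ind ((tr (c i) = tr (d (j+1)) ∧ tr (c (i+1)) = tr (d j)) ∧ pos (c i) < pos (d (j+1))))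
          + (∑ i ∈ range n, ∑ j ∈ range m, ind ((tr (c (i+1)) = tr (d j) ∧ tr (c i) = tr (d (j+1))) ∧ pos (c (i+1)) < pos (d j)))
          + (∑ i ∈ range n, ∑ j ∈ range m, ind ((tr (c (i+1)) = tr (d (j+1)) ∧ tr (c i) = tr (d j)) ∧ pos (c (i+1)) < pos (d (j+1)))) := by
          rw [← Finset.sum_add_distrib, ← Finset.sum_add_distrib, ← Finset.sum_add_distrib]
      _ = (∑ i ∈ range n, ∑ j ∈ range m, T1 i j) + (∑ i ∈ range n, ∑ j ∈ range m, T2 i j)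
          + (∑ i ∈ range n, ∑ j ∈ range m, T3 i j) + (∑ i ∈ range n, ∑ j ∈ range m, T4 i j) := by
          rw [s3, s4]
          congr 3
          exact Finset.sum_congr rfl (fun i _ => s2 i)
  -- Step B : pointwise vanishing
  rw [step1, ← Finset.sum_add_distrib, ← Finset.sum_add_distrib, ← Finset.sum_add_distrib]
  rw [show (0 : ZMod 2) = ∑ i ∈ range n, (0 : ZMod 2) from (Finset.sum_const_zero).symm]
  apply Finset.sum_congr rfl
  intro i _
  rw [← Finset.sum_add_distrib, ← Finset.sum_add_distrib, ← Finset.sum_add_distrib]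
  rw [show (0 : ZMod 2) = ∑ j ∈ range m, (0 : ZMod 2) from (Finset.sum_const_zero).symm]
  apply Finset.sum_congr rfl
  intro j _
  simp only [hT1, hT2, hT3, hT4]
  by_cases hz : tr (c i) = tr (d j)
  · by_cases hlt : pos (c i) < pos (d j)
    · have hp1 : tr (c (i+1)) ≠ tr (d j) := fun hEq => htc i (hz.trans hEq.symm)
      have hp2 : tr (c (i+(n-1))) ≠ tr (d j) := by
        have h := htc (i + (n-1))
        rw [show i + (n-1) + 1 = i + n by omega, hc i] at h
        exact fun hEq => h (hEq.trans hz.symm) |>.elim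
      have hq1 : tr (d (j+1)) ≠ tr (d j) := (htd j).symm
      have hq2 : tr (d (j+(m-1))) ≠ tr (d j) := by
        have h := htd (j + (m-1))
        rw [show j + (m-1) + 1 = j + m by omega, hd j] at h
        exact h
      have e1 : ind ((tr (c i) = tr (d j) ∧ tr (c (i+1)) = tr (d (j+1))) ∧ pos (c i) < pos (d j))
          = ind (tr (c (i+1)) = tr (d (j+1))) := by
        apply ind_congr; constructor
        · rintro ⟨⟨_, h⟩, _⟩; exact h
        · intro h; exact ⟨⟨hz, h⟩, hlt⟩
      have e2 : ind ((tr (c i) = tr (d j) ∧ tr (c (i+1)) = tr (d (j+(m-1)))) ∧ pos (c i) < pos (d j))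
          = ind (tr (c (i+1)) = tr (d (j+(m-1)))) := by
        apply ind_congr; constructor
        · rintro ⟨⟨_, h⟩, _⟩; exact h
        · intro h; exact ⟨⟨hz, h⟩, hlt⟩
      have e3 : ind ((tr (c i) = tr (d j) ∧ tr (c (i+(n-1))) = tr (d (j+1))) ∧ pos (c i) < pos (d j))
          = ind (tr (c (i+(n-1))) = tr (d (j+1))) := by
        apply ind_congr; constructor
        · rintro ⟨⟨_, h⟩, _⟩; exact h
        · intro h; exact ⟨⟨hz, h⟩, hlt⟩
      have e4 : ind ((tr (c i) = tr (d j) ∧ tr (c (i+(n-1))) = tr (d (j+(m-1)))) ∧ pos (c i) < pos (d j))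
          = ind (tr (c (i+(n-1))) = tr (d (j+(m-1)))) := by
        apply ind_congr; constructor
        · rintro ⟨⟨_, h⟩, _⟩; exact h
        · intro h; exact ⟨⟨hz, h⟩, hlt⟩
      rw [e1, e2, e3, e4]
      exact even4 (tr (d j)) (tr (c (i+1))) (tr (c (i+(n-1)))) (tr (d (j+1))) (tr (d (j+(m-1)))) hp1 hp2 hq1 hq2
    · have z : ∀ (Q : Prop) [Decidable Q], ind (Q ∧ pos (c i) < pos (d j)) = 0 := by
        intro Q _; rw [ind, if_neg (fun h => hlt h.2)]
      rw [z, z, z, z]; ring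
  · have z : ∀ (Q R : Prop) [Decidable Q] [Decidable R],
        ind ((tr (c i) = tr (d j) ∧ Q) ∧ R) = 0 := by
      intro Q R _ _; rw [ind, if_neg (fun h => hz h.1.1)]
    rw [z, z, z, z]; ring


lemma parity_XX (n m : ℕ) (hn : 1 ≤ n) (hm : 1 ≤ m) (c d : ℕ → V)
    (hc : ∀ i, c (i + n) = c i) (hd : ∀ j, d (j + m) = d j)
    (htc : ∀ i, tr (c i) ≠ tr (c (i+1))) (htd : ∀ j, tr (d j) ≠ tr (d (j+1)))
    (hdisj : ∀ i j, c i ≠ d j)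
    (hpi : ∀ p q : V, tr p = tr q → pos p = pos q → p = q) :
    ∑ i ∈ range n, ∑ j ∈ range m, XX tr pos (c i) (c (i+1)) (d j) (d (j+1)) = 0 := by
  rw [show ∑ i ∈ range n, ∑ j ∈ range m, XX tr pos (c i) (c (i+1)) (d j) (d (j+1))
      = ∑ i ∈ range n, ∑ j ∈ range m, NN tr pos (c i) (c (i+1)) (d j) (d (j+1)) from ?_]
  · exact parity_NN tr pos n m hn hm c d hc hd htc htd
  · apply Finset.sum_congr rfl; intro i _
    apply Finset.sum_congr rfl; intro j _
    refine XX_eq_NN tr pos _ _ _ _ (htc i) (htd j) ?_ ?_ ?_ ?_ <;>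
      exact fun ht hp => absurd (hpi _ _ ht hp) (hdisj _ _)

lemma XXzero (c : ℕ → V)
    (hsym : ∀ a b : ℕ, tr (c a) = tr (c b) → tr (c (a+1)) = tr (c (b+1)) →
        ¬ opp (pos (c a)) (pos (c b)) (pos (c (a+1))) (pos (c (b+1))))
    (hsym' : ∀ a b : ℕ, tr (c a) = tr (c (b+1)) → tr (c (a+1)) = tr (c b) →
        ¬ opp (pos (c a)) (pos (c (b+1))) (pos (c (a+1))) (pos (c b)))
    (a b : ℕ) : XX tr pos (c a) (c (a+1)) (c b) (c (b+1)) = 0 := by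
  rw [XX, ind, if_neg (fun h => hsym a b h.1 h.2.1 h.2.2),
    ind, if_neg (fun h => hsym' a b h.1 h.2.1 h.2.2)]
  norm_num

lemma succ_mod (m k : ℕ) (hm : 2 ≤ m) :
    (k+1) % m = if k % m = m - 1 then 0 else k % m + 1 := by
  rw [Nat.add_mod, Nat.mod_eq_of_lt (show 1 < m by omega)]
  by_cases h : k % m = m - 1
  · rw [if_pos h, h, show m - 1 + 1 = m by omega, Nat.mod_self]
  · rw [if_neg h]
    have := Nat.mod_lt k (show 0 < m by omega)
    exact Nat.mod_eq_of_lt (by omega)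

lemma split_up (n : ℕ) (c : ℕ → V) (i j : ℕ)
    (hn : 3 ≤ n)
    (hper : ∀ k, c (k + n) = c k)
    (hinj : ∀ a b, a < n → b < n → c a = c b → a = b)
    (htr : ∀ k, tr (c k) ≠ tr (c (k+1)))
    (hpi : ∀ p q : V, tr p = tr q → pos p = pos q → p = q)
    (hsym : ∀ a b : ℕ, tr (c a) = tr (c b) → tr (c (a+1)) = tr (c (b+1)) →
        ¬ opp (pos (c a)) (pos (c b)) (pos (c (a+1))) (pos (c (b+1))))
    (hsym' : ∀ a b : ℕ, tr (c a) = tr (c (b+1)) → tr (c (a+1)) = tr (c b) →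
        ¬ opp (pos (c a)) (pos (c (b+1))) (pos (c (a+1))) (pos (c b)))
    (hij : i < j) (hjn : j < n)
    (hci : tr (c i) = 2) (hci1 : tr (c (i+1)) = 0)
    (hcj : tr (c j) = 2) (hcj1 : tr (c (j+1)) = 0)
    (hlh : ∀ r, r < n → r ≠ i → r ≠ j →
      ∀ br tp : ℕ,
      ((tr (c r) = 2 ∧ tr (c (r+1)) = 0 ∧ br = pos (c r) ∧ tp = pos (c (r+1))) ∨
       (tr (c r) = 0 ∧ tr (c (r+1)) = 2 ∧ br = pos (c (r+1)) ∧ tp = pos (c r))) →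
      (br ≤ pos (c i) ∧ br ≤ pos (c j) ∧ tp ≤ pos (c (i+1)) ∧ tp ≤ pos (c (j+1))) ∨
      (pos (c i) ≤ br ∧ pos (c j) ≤ br ∧ pos (c (i+1)) ≤ tp ∧ pos (c (j+1)) ≤ tp)) :
    False := by
  have hn0 : 0 < n := by omega
  have cmod : ∀ a, c a = c (a % n) := by
    intro a
    induction a using Nat.strong_induction_on with
    | _ a ih =>
      by_cases h : a < n
      · rw [Nat.mod_eq_of_lt h]
      · push_neg at h
        have e : a - n + n = a := by omega
        rw [← e, hper, Nat.mod_eq_sub_mod (by omega : n ≤ a - n + n)]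
        have e2 : a - n + n - n = a - n := by omega
        rw [e2]
        exact ih (a - n) (by omega)
  have ceq : ∀ a b, a % n = b % n → c a = c b := by
    intro a b h; rw [cmod a, cmod b, h]
  have injmod : ∀ a b, c a = c b → a % n = b % n := by
    intro a b h
    exact hinj _ _ (Nat.mod_lt _ hn0) (Nat.mod_lt _ hn0)
      (by rw [← cmod a, ← cmod b]; exact h)
  -- the two inner arcs are not degenerate
  have hne20 : (2 : Fin 3) ≠ 0 := by decide
  have hjgt : i + 1 < j := by
    by_contra h
    have hj : j = i + 1 := by omega
    rw [hj] at hcj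
    exact absurd (hci1.symm.trans hcj) (by decide)
  have hjlt : j + 1 < i + n := by
    rcases Nat.lt_or_ge (j+1) (i+n) with h | h
    · exact h
    · exfalso
      have hjj : j + 1 = i + n := by omega
      have hcc : c (j+1) = c i := by rw [hjj, hper i]
      rw [hcc] at hcj1
      exact absurd (hcj1.symm.trans hci) (by decide)
  set n1 := j - i with hn1def
  set n2 := n - (j - i) with hn2def
  have hn1 : 2 ≤ n1 := by omega
  have hn2 : 2 ≤ n2 := by omega
  have hjn1 : i + n1 = j := by omega
  have hjn2 : j + n2 = i + n := by omega
  set c1 : ℕ → V := fun k => c (i + 1 + k % n1) with hc1def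
  set c2 : ℕ → V := fun k => c (j + 1 + k % n2) with hc2def
  have hper1 : ∀ k, c1 (k + n1) = c1 k := by
    intro k; simp only [hc1def, Nat.add_mod_right]
  have hper2 : ∀ k, c2 (k + n2) = c2 k := by
    intro k; simp only [hc2def, Nat.add_mod_right]
  have a1 : ∀ k, k < n1 → c1 k = c (i+1+k) := by
    intro k hk; simp only [hc1def, Nat.mod_eq_of_lt hk]
  have a1s : ∀ k, k + 1 < n1 → c1 (k+1) = c ((i+1+k)+1) := by
    intro k hk; rw [a1 (k+1) hk]; exact congrArg c (by omega)
  have a1e : c1 (n1 - 1) = c j := by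
    rw [a1 _ (by omega)]; exact congrArg c (by omega)
  have a1e' : c1 ((n1-1)+1) = c (i+1) := by
    have h : (n1-1)+1 = n1 := by omega
    rw [h]
    simp only [hc1def, Nat.mod_self]
  have a2 : ∀ k, k < n2 → c2 k = c (j+1+k) := by
    intro k hk; simp only [hc2def, Nat.mod_eq_of_lt hk]
  have a2s : ∀ k, k + 1 < n2 → c2 (k+1) = c ((j+1+k)+1) := by
    intro k hk; rw [a2 (k+1) hk]; exact congrArg c (by omega)
  have a2e : c2 (n2 - 1) = c i := by
    rw [a2 _ (by omega)]
    rw [show j + 1 + (n2 - 1) = i + n by omega]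
    exact hper i
  have a2e' : c2 ((n2-1)+1) = c (j+1) := by
    have h : (n2-1)+1 = n2 := by omega
    rw [h]
    simp only [hc2def, Nat.mod_self]
  -- consecutive tracks distinct along c1, c2
  have htr1 : ∀ k, tr (c1 k) ≠ tr (c1 (k+1)) := by
    intro k
    have hk : k % n1 < n1 := Nat.mod_lt _ (by omega)
    have hsucc := succ_mod n1 k hn1
    by_cases h : k % n1 = n1 - 1
    · rw [if_pos h] at hsucc
      have e1 : c1 k = c j := by
        simp only [hc1def, h]; exact congrArg c (by omega)
      have e2 : c1 (k+1) = c (i+1) := by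
        show c (i + 1 + (k+1) % n1) = _
        rw [hsucc]
      rw [e1, e2, hcj, hci1]; exact hne20
    · rw [if_neg h] at hsucc
      have e1 : c1 k = c (i+1+(k%n1)) := rfl
      have e2 : c1 (k+1) = c ((i+1+(k%n1))+1) := by
        simp only [hc1def, hsucc]; exact congrArg c (by omega)
      rw [e1, e2]; exact htr _
  have htr2 : ∀ k, tr (c2 k) ≠ tr (c2 (k+1)) := by
    intro k
    have hk : k % n2 < n2 := Nat.mod_lt _ (by omega)
    have hsucc := succ_mod n2 k hn2
    by_cases h : k % n2 = n2 - 1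
    · rw [if_pos h] at hsucc
      have e1 : c2 k = c i := by
        simp only [hc2def, h]
        rw [show j + 1 + (n2 - 1) = i + n by omega]
        exact hper i
      have e2 : c2 (k+1) = c (j+1) := by
        show c (j + 1 + (k+1) % n2) = _
        rw [hsucc]
      rw [e1, e2, hci, hcj1]; exact hne20
    · rw [if_neg h] at hsucc
      have e1 : c2 k = c (j+1+(k%n2)) := rfl
      have e2 : c2 (k+1) = c ((j+1+(k%n2))+1) := by
        simp only [hc2def, hsucc]; exact congrArg c (by omega)
      rw [e1, e2]; exact htr _
  -- disjointness
  have hdisj : ∀ k l, c1 k ≠ c2 l := by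
    intro k l h
    have hk : k % n1 < n1 := Nat.mod_lt _ (by omega)
    have hl : l % n2 < n2 := Nat.mod_lt _ (by omega)
    set a := i + 1 + k % n1 with hadef
    set b := j + 1 + l % n2 with hbdef
    have hab : c a = c b := h
    have hmod := injmod a b hab
    have ha : a % n = a := Nat.mod_eq_of_lt (by omega)
    have hblt : b < 2 * n := by omega
    rcases Nat.lt_or_ge b n with hb | hb
    · rw [ha, Nat.mod_eq_of_lt hb] at hmod; omega
    · rw [ha, Nat.mod_eq_sub_mod hb, Nat.mod_eq_of_lt (by omega)] at hmod; omega
  -- killing lemmas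
  have killR : ∀ r, r < n → r ≠ i → r ≠ j →
      XX tr pos (c j) (c (i+1)) (c r) (c (r+1)) = 0 := by
    intro r hr hri hrj
    rw [XX, ind, if_neg, ind, if_neg]
    · norm_num
    · rintro ⟨h1, h2, h3⟩
      have ht1 : tr (c (r+1)) = 2 := by rw [← h1, hcj]
      have ht2 : tr (c r) = 0 := by rw [← h2, hci1]
      rcases h3 with ⟨u1, u2⟩ | ⟨u1, u2⟩ <;>
        rcases hlh r hr hri hrj (pos (c (r+1))) (pos (c r))
          (Or.inr ⟨ht2, ht1, rfl, rfl⟩) with hL | hH <;> omega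
    · rintro ⟨h1, h2, h3⟩
      have ht1 : tr (c r) = 2 := by rw [← h1, hcj]
      have ht2 : tr (c (r+1)) = 0 := by rw [← h2, hci1]
      rcases h3 with ⟨u1, u2⟩ | ⟨u1, u2⟩ <;>
        rcases hlh r hr hri hrj (pos (c r)) (pos (c (r+1)))
          (Or.inl ⟨ht1, ht2, rfl, rfl⟩) with hL | hH <;> omega
  have killL : ∀ r, r < n → r ≠ i → r ≠ j →
      XX tr pos (c r) (c (r+1)) (c i) (c (j+1)) = 0 := by
    intro r hr hri hrj
    rw [XX, ind, if_neg, ind, if_neg]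
    · norm_num
    · rintro ⟨h1, h2, h3⟩
      have ht1 : tr (c r) = 0 := by rw [h1, hcj1]
      have ht2 : tr (c (r+1)) = 2 := by rw [h2, hci]
      rcases h3 with ⟨u1, u2⟩ | ⟨u1, u2⟩ <;>
        rcases hlh r hr hri hrj (pos (c (r+1))) (pos (c r))
          (Or.inr ⟨ht1, ht2, rfl, rfl⟩) with hL | hH <;> omega
    · rintro ⟨h1, h2, h3⟩
      have ht1 : tr (c r) = 2 := by rw [h1, hci]
      have ht2 : tr (c (r+1)) = 0 := by rw [h2, hcj1]
      rcases h3 with ⟨u1, u2⟩ | ⟨u1, u2⟩ <;>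
        rcases hlh r hr hri hrj (pos (c r)) (pos (c (r+1)))
          (Or.inl ⟨ht1, ht2, rfl, rfl⟩) with hL | hH <;> omega
  -- the unique crossing pair
  have lastXX : XX tr pos (c j) (c (i+1)) (c i) (c (j+1)) = 1 := by
    have dij : pos (c i) ≠ pos (c j) := by
      intro hp
      exact absurd (hinj i j (by omega) hjn (hpi _ _ (hci.trans hcj.symm) hp)) (by omega)
    have dij1 : pos (c (i+1)) ≠ pos (c (j+1)) := by
      intro hp
      have hcc : c (i+1) = c (j+1) := hpi _ _ (hci1.trans hcj1.symm) hp
      have hmod := injmod _ _ hcc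
      have h1 : (i+1) % n = i+1 := Nat.mod_eq_of_lt (by omega)
      rcases Nat.lt_or_ge (j+1) n with hb | hb
      · rw [h1, Nat.mod_eq_of_lt hb] at hmod; omega
      · have : j + 1 = n := by omega
        rw [h1, this, Nat.mod_self] at hmod; omega
    have hs := hsym j i (hcj.trans hci.symm) (hcj1.trans hci1.symm)
    have hguard1 : tr (c j) = tr (c i) ∧ tr (c (i+1)) = tr (c (j+1)) ∧
        opp (pos (c j)) (pos (c i)) (pos (c (i+1))) (pos (c (j+1))) := by
      refine ⟨hcj.trans hci.symm, hci1.trans hcj1.symm, ?_⟩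
      unfold opp at hs ⊢
      omega
    have hguard2 : ¬ (tr (c j) = tr (c (j+1)) ∧ tr (c (i+1)) = tr (c i) ∧
        opp (pos (c j)) (pos (c (j+1))) (pos (c (i+1))) (pos (c i))) := by
      rintro ⟨h1, _⟩
      rw [hcj, hcj1] at h1
      exact hne20 h1
    rw [XX, ind, if_pos hguard1, ind, if_neg hguard2]
    norm_num
  -- pointwise evaluation of the crossing sum
  have pointwise : ∀ k ∈ range n1, ∀ l ∈ range n2,
      XX tr pos (c1 k) (c1 (k+1)) (c2 l) (c2 (l+1))
      = if k = n1 - 1 ∧ l = n2 - 1 then 1 else 0 := by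
    intro k hk l hl
    rw [Finset.mem_range] at hk hl
    by_cases hk1 : k = n1 - 1 <;> by_cases hl1 : l = n2 - 1
    · subst hk1; subst hl1
      rw [a1e, a1e', a2e, a2e', if_pos ⟨rfl, rfl⟩, lastXX]
    · subst hk1
      rw [if_neg (by tauto)]
      have hlo : l + 1 < n2 := by omega
      have e1 : c2 l = c (j+1+l) := a2 l (by omega)
      have e2 : c2 (l+1) = c ((j+1+l)+1) := a2s l hlo
      set b := j + 1 + l with hbdef
      set r := b % n with hrdef
      have hrn : r < n := Nat.mod_lt _ hn0
      have hrval : (b < n ∧ r = b) ∨ (n ≤ b ∧ r = b - n) := by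
        rcases Nat.lt_or_ge b n with h | h
        · exact Or.inl ⟨h, Nat.mod_eq_of_lt h⟩
        · refine Or.inr ⟨h, ?_⟩
          rw [hrdef, Nat.mod_eq_sub_mod h, Nat.mod_eq_of_lt (by omega)]
      have hri : r ≠ i := by rcases hrval with ⟨h, e⟩ | ⟨h, e⟩ <;> omega
      have hrj : r ≠ j := by rcases hrval with ⟨h, e⟩ | ⟨h, e⟩ <;> omega
      have eb : c b = c r := cmod b
      have eb1 : c (b+1) = c (r+1) := by
        apply ceq
        conv_lhs => rw [Nat.add_mod]
        conv_rhs => rw [Nat.add_mod]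
        rw [Nat.mod_eq_of_lt hrn]
      rw [e1, e2, eb, eb1, a1e, a1e']
      exact killR r hrn hri hrj
    · subst hl1
      rw [if_neg (by tauto)]
      have hko : k + 1 < n1 := by omega
      have e1 : c1 k = c (i+1+k) := a1 k (by omega)
      have e2 : c1 (k+1) = c ((i+1+k)+1) := a1s k hko
      rw [e1, e2, a2e, a2e']
      exact killL (i+1+k) (by omega) (by omega) (by omega)
    · rw [if_neg (by tauto)]
      have e1 : c1 k = c (i+1+k) := a1 k (by omega)
      have e2 : c1 (k+1) = c ((i+1+k)+1) := a1s k (by omega)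
      have e3 : c2 l = c (j+1+l) := a2 l (by omega)
      have e4 : c2 (l+1) = c ((j+1+l)+1) := a2s l (by omega)
      rw [e1, e2, e3, e4]
      exact XXzero tr pos c hsym hsym' _ _
  have hsum1 : ∑ k ∈ range n1, ∑ l ∈ range n2,
      XX tr pos (c1 k) (c1 (k+1)) (c2 l) (c2 (l+1)) = 1 := by
    rw [Finset.sum_congr rfl (fun k hk => Finset.sum_congr rfl (fun l hl => pointwise k hk l hl))]
    have inner : ∀ k : ℕ, ∑ l ∈ range n2, (if k = n1-1 ∧ l = n2-1 then (1:ZMod 2) else 0)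
        = if k = n1 - 1 then 1 else 0 := by
      intro k
      by_cases h : k = n1-1
      · rw [Finset.sum_congr rfl (fun l _ =>
            show (if k = n1-1 ∧ l = n2-1 then (1:ZMod 2) else 0) = if l = n2-1 then 1 else 0
            by simp [h]),
          Finset.sum_ite_eq' (range n2) (n2-1) (fun _ => (1:ZMod 2)),
          if_pos (Finset.mem_range.mpr (by omega)), if_pos h]
      · simp [h]
    rw [Finset.sum_congr rfl (fun k _ => inner k),
      Finset.sum_ite_eq' (range n1) (n1-1) (fun _ => (1:ZMod 2)),
      if_pos (Finset.mem_range.mpr (by omega))]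
  have hpar := parity_XX tr pos n1 n2 (by omega) (by omega) c1 c2 hper1 hper2 htr1 htr2 hdisj hpi
  rw [hsum1] at hpar
  exact one_ne_zero hpar

def swap02 : Fin 3 → Fin 3 := fun t => if t = 0 then 2 else if t = 2 then 0 else t

lemma swap02_inj : ∀ a b : Fin 3, swap02 a = swap02 b → a = b := by decide
lemma swap02_two : ∀ t : Fin 3, swap02 t = 2 ↔ t = 0 := by decide
lemma swap02_zero : ∀ t : Fin 3, swap02 t = 0 ↔ t = 2 := by decide

def isUpP (c : ℕ → V) (k : ℕ) : Prop := tr (c k) = 2 ∧ tr (c (k+1)) = 0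

def isDnP (c : ℕ → V) (k : ℕ) : Prop := tr (c k) = 0 ∧ tr (c (k+1)) = 2

instance {c : ℕ → V} {k : ℕ} : Decidable (isUpP tr c k) := by unfold isUpP; infer_instance
instance {c : ℕ → V} {k : ℕ} : Decidable (isDnP tr c k) := by unfold isDnP; infer_instance

lemma not_up_dn {c : ℕ → V} {k : ℕ} (h : isDnP tr c k) : ¬ isUpP tr c k := by
  intro hu
  exact absurd (hu.1.symm.trans h.1) (by decide)

def botP (c : ℕ → V) (k : ℕ) : ℕ := if isUpP tr c k then pos (c k) else pos (c (k+1))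

def topP (c : ℕ → V) (k : ℕ) : ℕ := if isUpP tr c k then pos (c (k+1)) else pos (c k)

def dvP (c : ℕ → V) (k : ℕ) : ℤ := if isUpP tr c k then 1 else -1

lemma botP_up {c : ℕ → V} {k : ℕ} (h : isUpP tr c k) : botP tr pos c k = pos (c k) := if_pos h
lemma botP_dn {c : ℕ → V} {k : ℕ} (h : isDnP tr c k) : botP tr pos c k = pos (c (k+1)) :=
  if_neg (not_up_dn tr h)
lemma topP_up {c : ℕ → V} {k : ℕ} (h : isUpP tr c k) : topP tr pos c k = pos (c (k+1)) := if_pos h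
lemma topP_dn {c : ℕ → V} {k : ℕ} (h : isDnP tr c k) : topP tr pos c k = pos (c k) :=
  if_neg (not_up_dn tr h)
lemma dvP_up {c : ℕ → V} {k : ℕ} (h : isUpP tr c k) : dvP tr c k = 1 := if_pos h
lemma dvP_dn {c : ℕ → V} {k : ℕ} (h : isDnP tr c k) : dvP tr c k = -1 := if_neg (not_up_dn tr h)

lemma netC_abs_le_one (n : ℕ) (c : ℕ → V) (hn : 3 ≤ n)
    (hper : ∀ k, c (k + n) = c k)
    (hinj : ∀ a b, a < n → b < n → c a = c b → a = b)
    (htr : ∀ k, tr (c k) ≠ tr (c (k+1)))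
    (hpi : ∀ p q : V, tr p = tr q → pos p = pos q → p = q)
    (hsym : ∀ a b : ℕ, tr (c a) = tr (c b) → tr (c (a+1)) = tr (c (b+1)) →
        ¬ opp (pos (c a)) (pos (c b)) (pos (c (a+1))) (pos (c (b+1))))
    (hsym' : ∀ a b : ℕ, tr (c a) = tr (c (b+1)) → tr (c (a+1)) = tr (c b) →
        ¬ opp (pos (c a)) (pos (c (b+1))) (pos (c (a+1))) (pos (c b))) :
    |∑ k ∈ range n, ((if tr (c k) = 2 ∧ tr (c (k+1)) = 0 then (1:ℤ) else 0)
      - (if tr (c k) = 0 ∧ tr (c (k+1)) = 2 then (1:ℤ) else 0))| ≤ 1 := by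
  classical
  have hn0 : 0 < n := by omega
  have cmod : ∀ a, c a = c (a % n) := by
    intro a
    induction a using Nat.strong_induction_on with
    | _ a ih =>
      by_cases h : a < n
      · rw [Nat.mod_eq_of_lt h]
      · push_neg at h
        have e : a - n + n = a := by omega
        rw [← e, hper, Nat.mod_eq_sub_mod (by omega : n ≤ a - n + n)]
        have e2 : a - n + n - n = a - n := by omega
        rw [e2]
        exact ih (a - n) (by omega)
  have injmod : ∀ a b, c a = c b → a % n = b % n := by
    intro a b h
    exact hinj _ _ (Nat.mod_lt _ hn0) (Nat.mod_lt _ hn0)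
      (by rw [← cmod a, ← cmod b]; exact h)
  set S : Finset ℕ := (range n).filter (fun k => isUpP tr c k ∨ isDnP tr c k) with hS
  have memS : ∀ k, k ∈ S ↔ (k < n ∧ (isUpP tr c k ∨ isDnP tr c k)) := by
    intro k; rw [hS, Finset.mem_filter, Finset.mem_range]
  set B : ℕ := (∑ k ∈ range (n+1), pos (c k)) + 1 with hB
  have hposB : ∀ k, k ≤ n → pos (c k) < B := by
    intro k hk
    have h1 : pos (c k) ≤ ∑ m ∈ range (n+1), pos (c m) :=
      Finset.single_le_sum (f := fun m => pos (c m)) (fun m _ => Nat.zero_le _)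
        (Finset.mem_range.mpr (by omega))
    omega
  have hBbound : ∀ k, k < n → botP tr pos c k < B ∧ topP tr pos c k < B := by
    intro k hk
    unfold botP topP
    constructor <;> split_ifs
    all_goals first
      | exact hposB k (by omega)
      | exact hposB (k+1) (by omega)
  set key : ℕ → ℕ := fun k => B * botP tr pos c k + topP tr pos c k with hkey
  -- the sum over range n equals the signed sum over S
  have hsum : ∑ k ∈ range n, ((if tr (c k) = 2 ∧ tr (c (k+1)) = 0 then (1:ℤ) else 0)
      - (if tr (c k) = 0 ∧ tr (c (k+1)) = 2 then (1:ℤ) else 0)) = ∑ k ∈ S, dvP tr c k := by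
    rw [hS, Finset.sum_filter]
    apply Finset.sum_congr rfl
    intro k _
    by_cases hu : isUpP tr c k
    · have hd : ¬ isDnP tr c k := fun hd => not_up_dn tr hd hu
      rw [if_pos (show tr (c k) = 2 ∧ tr (c (k+1)) = 0 from hu),
        if_neg (show ¬(tr (c k) = 0 ∧ tr (c (k+1)) = 2) from hd),
        if_pos (Or.inl hu), dvP_up tr hu]
      ring
    · by_cases hd : isDnP tr c k
      · rw [if_neg (show ¬(tr (c k) = 2 ∧ tr (c (k+1)) = 0) from hu),
          if_pos (show tr (c k) = 0 ∧ tr (c (k+1)) = 2 from hd),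
          if_pos (Or.inr hd), dvP_dn tr hd]
        ring
      · rw [if_neg (show ¬(tr (c k) = 2 ∧ tr (c (k+1)) = 0) from hu),
          if_neg (show ¬(tr (c k) = 0 ∧ tr (c (k+1)) = 2) from hd),
          if_neg (show ¬(isUpP tr c k ∨ isDnP tr c k) by tauto)]
        ring
  rw [hsum]
  -- noncrossing in normalized bottom/top form
  have nc : ∀ k l, k ∈ S → l ∈ S → botP tr pos c k < botP tr pos c l →
      topP tr pos c k ≤ topP tr pos c l := by
    intro k l hk hl hb
    rcases (memS k).mp hk with ⟨hkn, hkud⟩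
    rcases (memS l).mp hl with ⟨hln, hlud⟩
    rcases hkud with hku | hkd <;> rcases hlud with hlu | hld
    · rw [botP_up tr pos hku, botP_up tr pos hlu] at hb
      rw [topP_up tr pos hku, topP_up tr pos hlu]
      have := hsym k l (hku.1.trans hlu.1.symm) (hku.2.trans hlu.2.symm)
      unfold opp at this
      omega
    · rw [botP_up tr pos hku, botP_dn tr pos hld] at hb
      rw [topP_up tr pos hku, topP_dn tr pos hld]
      have := hsym' k l (hku.1.trans hld.2.symm) (hku.2.trans hld.1.symm)
      unfold opp at this
      omega
    · rw [botP_dn tr pos hkd, botP_up tr pos hlu] at hb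
      rw [topP_dn tr pos hkd, topP_up tr pos hlu]
      have := hsym' l k (hlu.1.trans hkd.2.symm) (hlu.2.trans hkd.1.symm)
      unfold opp at this
      omega
    · rw [botP_dn tr pos hkd, botP_dn tr pos hld] at hb
      rw [topP_dn tr pos hkd, topP_dn tr pos hld]
      have := hsym k l (hkd.1.trans hld.1.symm) (hkd.2.trans hld.2.symm)
      unfold opp at this
      omega
  have keyeq : ∀ k l, k < n → l < n → key k = key l →
      botP tr pos c k = botP tr pos c l ∧ topP tr pos c k = topP tr pos c l := by
    intro k l hk hl h
    obtain ⟨bk, tk⟩ := hBbound k hk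
    obtain ⟨bl, tl⟩ := hBbound l hl
    have h' : B * botP tr pos c k + topP tr pos c k = B * botP tr pos c l + topP tr pos c l := h
    have hbb : botP tr pos c k = botP tr pos c l := by
      rcases Nat.lt_trichotomy (botP tr pos c k) (botP tr pos c l) with hh | hh | hh
      · exfalso
        have : B * (botP tr pos c k + 1) ≤ B * botP tr pos c l :=
          Nat.mul_le_mul_left B (by omega)
        nlinarith
      · exact hh
      · exfalso
        have : B * (botP tr pos c l + 1) ≤ B * botP tr pos c k :=
          Nat.mul_le_mul_left B (by omega)
        nlinarith
    refine ⟨hbb, ?_⟩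
    rw [hbb] at h'
    omega
  have modsucc : ∀ a, a < n → (a+1) % n = if a+1 = n then 0 else a+1 := by
    intro a ha
    split_ifs with h
    · rw [h, Nat.mod_self]
    · exact Nat.mod_eq_of_lt (by omega)
  have keyinj : ∀ k, k ∈ S → ∀ l, l ∈ S → key k = key l → k = l := by
    intro k hk l hl h
    rcases (memS k).mp hk with ⟨hkn, hkud⟩
    rcases (memS l).mp hl with ⟨hln, hlud⟩
    obtain ⟨hbe, hte⟩ := keyeq k l hkn hln h
    rcases hkud with hku | hkd <;> rcases hlud with hlu | hld
    · rw [botP_up tr pos hku, botP_up tr pos hlu] at hbe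
      exact hinj k l hkn hln (hpi _ _ (hku.1.trans hlu.1.symm) hbe)
    · exfalso
      rw [botP_up tr pos hku, botP_dn tr pos hld] at hbe
      rw [topP_up tr pos hku, topP_dn tr pos hld] at hte
      have v1 : c k = c (l+1) := hpi _ _ (hku.1.trans hld.2.symm) hbe
      have v2 : c (k+1) = c l := hpi _ _ (hku.2.trans hld.1.symm) hte
      have m1 := injmod _ _ v1
      have m2 := injmod _ _ v2
      rw [Nat.mod_eq_of_lt hkn, modsucc l hln] at m1
      rw [modsucc k hkn, Nat.mod_eq_of_lt hln] at m2
      split_ifs at m1 m2 <;> omega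
    · exfalso
      rw [botP_dn tr pos hkd, botP_up tr pos hlu] at hbe
      rw [topP_dn tr pos hkd, topP_up tr pos hlu] at hte
      have v1 : c (k+1) = c l := hpi _ _ (hkd.2.trans hlu.1.symm) hbe
      have v2 : c k = c (l+1) := hpi _ _ (hkd.1.trans hlu.2.symm) hte
      have m1 := injmod _ _ v1
      have m2 := injmod _ _ v2
      rw [modsucc k hkn, Nat.mod_eq_of_lt hln] at m1
      rw [Nat.mod_eq_of_lt hkn, modsucc l hln] at m2
      split_ifs at m1 m2 <;> omega
    · rw [topP_dn tr pos hkd, topP_dn tr pos hld] at hte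
      exact hinj k l hkn hln (hpi _ _ (hkd.1.trans hld.1.symm) hte)
  have keyle : ∀ k l, k ∈ S → l ∈ S → key k ≤ key l →
      botP tr pos c k ≤ botP tr pos c l ∧ topP tr pos c k ≤ topP tr pos c l := by
    intro k l hk hl h
    have hkn := ((memS k).mp hk).1
    have hln := ((memS l).mp hl).1
    obtain ⟨bk, tk⟩ := hBbound k hkn
    obtain ⟨bl, tl⟩ := hBbound l hln
    have h' : B * botP tr pos c k + topP tr pos c k ≤ B * botP tr pos c l + topP tr pos c l := h
    have hb : botP tr pos c k ≤ botP tr pos c l := by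
      by_contra hc
      push_neg at hc
      have h1 : B * (botP tr pos c l + 1) ≤ B * botP tr pos c k :=
        Nat.mul_le_mul_left B (by omega)
      nlinarith
    refine ⟨hb, ?_⟩
    rcases Nat.lt_or_ge (botP tr pos c k) (botP tr pos c l) with hlt | hge
    · exact nc k l hk hl hlt
    · have hbe : botP tr pos c k = botP tr pos c l := by omega
      rw [hbe] at h'
      omega
  -- the generic splitting contradiction, for an ordered same-direction pair
  have mainUp : ∀ k l, k ∈ S → l ∈ S → k < l → isUpP tr c k → isUpP tr c l →
      (∀ r, r ∈ S → r ≠ k → r ≠ l →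
        (botP tr pos c r ≤ botP tr pos c k ∧ botP tr pos c r ≤ botP tr pos c l ∧
         topP tr pos c r ≤ topP tr pos c k ∧ topP tr pos c r ≤ topP tr pos c l) ∨
        (botP tr pos c k ≤ botP tr pos c r ∧ botP tr pos c l ≤ botP tr pos c r ∧
         topP tr pos c k ≤ topP tr pos c r ∧ topP tr pos c l ≤ topP tr pos c r)) → False := by
    intro k l hk hl hord hku hlu hco
    refine split_up tr pos n c k l hn hper hinj htr hpi hsym hsym' hord ((memS l).mp hl).1
      hku.1 hku.2 hlu.1 hlu.2 ?_
    intro r hr hri hrj br tp hprem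
    have hrS : r ∈ S := (memS r).mpr ⟨hr, by
      rcases hprem with ⟨h1, h2, _⟩ | ⟨h1, h2, _⟩
      · exact Or.inl ⟨h1, h2⟩
      · exact Or.inr ⟨h1, h2⟩⟩
    have hbt : br = botP tr pos c r ∧ tp = topP tr pos c r := by
      rcases hprem with ⟨h1, h2, e1, e2⟩ | ⟨h1, h2, e1, e2⟩
      · rw [e1, e2, botP_up tr pos ⟨h1, h2⟩, topP_up tr pos ⟨h1, h2⟩]
        exact ⟨rfl, rfl⟩
      · rw [e1, e2, botP_dn tr pos ⟨h1, h2⟩, topP_dn tr pos ⟨h1, h2⟩]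
        exact ⟨rfl, rfl⟩
    have hbk := botP_up tr pos hku
    have htk := topP_up tr pos hku
    have hbl := botP_up tr pos hlu
    have htl := topP_up tr pos hlu
    rcases hco r hrS hri hrj with hLOW | hHIGH
    · left; omega
    · right; omega
  have mainDn : ∀ k l, k ∈ S → l ∈ S → k < l → isDnP tr c k → isDnP tr c l →
      (∀ r, r ∈ S → r ≠ k → r ≠ l →
        (botP tr pos c r ≤ botP tr pos c k ∧ botP tr pos c r ≤ botP tr pos c l ∧
         topP tr pos c r ≤ topP tr pos c k ∧ topP tr pos c r ≤ topP tr pos c l) ∨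
        (botP tr pos c k ≤ botP tr pos c r ∧ botP tr pos c l ≤ botP tr pos c r ∧
         topP tr pos c k ≤ topP tr pos c r ∧ topP tr pos c l ≤ topP tr pos c r)) → False := by
    intro k l hk hl hord hkd hld hco
    refine split_up (fun v => swap02 (tr v)) pos n c k l hn hper hinj
      (fun a h => htr a (swap02_inj _ _ h))
      (fun p q h hp => hpi p q (swap02_inj _ _ h) hp)
      (fun a b h1 h2 => hsym a b (swap02_inj _ _ h1) (swap02_inj _ _ h2))
      (fun a b h1 h2 => hsym' a b (swap02_inj _ _ h1) (swap02_inj _ _ h2))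
      hord ((memS l).mp hl).1
      ((swap02_two _).mpr hkd.1) ((swap02_zero _).mpr hkd.2)
      ((swap02_two _).mpr hld.1) ((swap02_zero _).mpr hld.2) ?_
    intro r hr hri hrj br tp hprem
    have hprem' : (isDnP tr c r ∧ br = pos (c r) ∧ tp = pos (c (r+1))) ∨
        (isUpP tr c r ∧ br = pos (c (r+1)) ∧ tp = pos (c r)) := by
      rcases hprem with ⟨h1, h2, e1, e2⟩ | ⟨h1, h2, e1, e2⟩
      · exact Or.inl ⟨⟨(swap02_two _).mp h1, (swap02_zero _).mp h2⟩, e1, e2⟩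
      · exact Or.inr ⟨⟨(swap02_zero _).mp h1, (swap02_two _).mp h2⟩, e1, e2⟩
    have hrS : r ∈ S := (memS r).mpr ⟨hr, by
      rcases hprem' with ⟨h1, _⟩ | ⟨h1, _⟩
      · exact Or.inr h1
      · exact Or.inl h1⟩
    have hbt : br = topP tr pos c r ∧ tp = botP tr pos c r := by
      rcases hprem' with ⟨h1, e1, e2⟩ | ⟨h1, e1, e2⟩
      · rw [e1, e2, botP_dn tr pos h1, topP_dn tr pos h1]
        exact ⟨rfl, rfl⟩
      · rw [e1, e2, botP_up tr pos h1, topP_up tr pos h1]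
        exact ⟨rfl, rfl⟩
    have hbk := botP_dn tr pos hkd
    have htk := topP_dn tr pos hkd
    have hbl := botP_dn tr pos hld
    have htl := topP_dn tr pos hld
    rcases hco r hrS hri hrj with hLOW | hHIGH
    · left; omega
    · right; omega
  -- conclusion via the alternation lemma
  apply alt_le_one key (dvP tr c) S
  · intro k _
    unfold dvP
    split_ifs <;> simp
  · exact fun k hk l hl h => keyinj k hk l hl h
  · intro k hk l hl hkl hdveq hkey2
    by_contra hno
    push_neg at hno
    have hcoord : ∀ r, r ∈ S → r ≠ k → r ≠ l →
        (botP tr pos c r ≤ botP tr pos c k ∧ botP tr pos c r ≤ botP tr pos c l ∧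
         topP tr pos c r ≤ topP tr pos c k ∧ topP tr pos c r ≤ topP tr pos c l) ∨
        (botP tr pos c k ≤ botP tr pos c r ∧ botP tr pos c l ≤ botP tr pos c r ∧
         topP tr pos c k ≤ topP tr pos c r ∧ topP tr pos c l ≤ topP tr pos c r) := by
      intro r hr hrk hrl
      rcases lt_trichotomy (key r) (key k) with h1 | h1 | h1
      · left
        obtain ⟨x1, x2⟩ := keyle r k hr hk (le_of_lt h1)
        obtain ⟨x3, x4⟩ := keyle r l hr hl (le_of_lt (h1.trans hkey2))
        exact ⟨x1, x3, x2, x4⟩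
      · exact absurd (keyinj r hr k hk h1) hrk
      · rcases lt_trichotomy (key r) (key l) with h2 | h2 | h2
        · exact absurd (hno r hr h1) (by omega)
        · exact absurd (keyinj r hr l hl h2) hrl
        · right
          obtain ⟨x1, x2⟩ := keyle l r hl hr (le_of_lt h2)
          obtain ⟨x3, x4⟩ := keyle k r hk hr (le_of_lt (hkey2.trans h2))
          exact ⟨x3, x1, x4, x2⟩
    have hcoord' : ∀ r, r ∈ S → r ≠ l → r ≠ k →
        (botP tr pos c r ≤ botP tr pos c l ∧ botP tr pos c r ≤ botP tr pos c k ∧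
         topP tr pos c r ≤ topP tr pos c l ∧ topP tr pos c r ≤ topP tr pos c k) ∨
        (botP tr pos c l ≤ botP tr pos c r ∧ botP tr pos c k ≤ botP tr pos c r ∧
         topP tr pos c l ≤ topP tr pos c r ∧ topP tr pos c k ≤ topP tr pos c r) := by
      intro r hr hrl hrk
      rcases hcoord r hr hrk hrl with ⟨x1, x2, x3, x4⟩ | ⟨x1, x2, x3, x4⟩
      · exact Or.inl ⟨x2, x1, x4, x3⟩
      · exact Or.inr ⟨x2, x1, x4, x3⟩
    exfalso
    rcases ((memS k).mp hk).2 with hku | hkd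
    · have hlu : isUpP tr c l := by
        rcases ((memS l).mp hl).2 with h | h
        · exact h
        · exfalso
          rw [dvP_up tr hku, (dvP_dn tr h : dvP tr c l = -1)] at hdveq
          omega
      rcases Nat.lt_or_ge k l with ho | ho
      · exact mainUp k l hk hl ho hku hlu (fun r hr h1 h2 => hcoord r hr h1 h2)
      · exact mainUp l k hl hk (by omega) hlu hku (fun r hr h1 h2 => hcoord' r hr h1 h2)
    · have hld : isDnP tr c l := by
        rcases ((memS l).mp hl).2 with h | h
        · exfalso
          rw [dvP_dn tr hkd, (dvP_up tr h : dvP tr c l = 1)] at hdveq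
          omega
        · exact h
      rcases Nat.lt_or_ge k l with ho | ho
      · exact mainDn k l hk hl ho hkd hld (fun r hr h1 h2 => hcoord r hr h1 h2)
      · exact mainDn l k hl hk (by omega) hld hkd (fun r hr h1 h2 => hcoord' r hr h1 h2)


end TrackProof

namespace TrackProof

open SimpleGraph Finset

variable {G : SimpleGraph V}

lemma walkDelta_eq_sum (T : TrackLayout G 3) :
    ∀ {u v : V} (p : G.Walk u v),
      walkDelta T p = ∑ i ∈ range p.length, trackDelta T (p.getVert i) (p.getVert (i+1)) := by
  intro u v p
  induction p with
  | nil => simp [walkDelta]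
  | @cons a b w h q ih =>
    show trackDelta T a b + walkDelta T q = _
    rw [ih, SimpleGraph.Walk.length_cons, Finset.sum_range_succ']
    simp only [SimpleGraph.Walk.getVert_cons_succ, SimpleGraph.Walk.getVert_zero]
    ring

lemma trackDelta_formula (T : TrackLayout G 3) (u v : V) (h : T.track u ≠ T.track v) :
    trackDelta T u v = (((T.track v : ℕ) : ℤ) - ((T.track u : ℕ) : ℤ))
      + 3 * ((if T.track u = 2 ∧ T.track v = 0 then (1:ℤ) else 0)
           - (if T.track u = 0 ∧ T.track v = 2 then (1:ℤ) else 0)) := by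
  have key : ∀ a b : Fin 3, a ≠ b →
      ((if b = a + 1 then (1:ℤ) else -1) = (((b : ℕ) : ℤ) - ((a : ℕ) : ℤ))
        + 3 * ((if a = 2 ∧ b = 0 then (1:ℤ) else 0) - (if a = 0 ∧ b = 2 then (1:ℤ) else 0))) := by
    decide
  exact key _ _ h

lemma trackDelta_pm (T : TrackLayout G 3) (u v : V) :
    trackDelta T u v = 1 ∨ trackDelta T u v = -1 := by
  unfold trackDelta
  split_ifs <;> simp

lemma getVert_support_get {u v : V} (p : G.Walk u v) :
    ∀ (i : ℕ), i ≤ p.length →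
      ∀ (hh : i < p.support.length), p.getVert i = p.support[i]'hh := by
  induction p with
  | nil =>
    intro i hi hh
    rw [SimpleGraph.Walk.length_nil] at hi
    interval_cases i
    rfl
  | @cons a b w h q ih =>
    intro i hi hh
    cases i with
    | zero => rfl
    | succ i =>
      rw [SimpleGraph.Walk.getVert_cons_succ]
      have hh' : i < q.support.length := by
        rw [SimpleGraph.Walk.length_support] at hh ⊢
        rw [SimpleGraph.Walk.length_cons] at hi
        omega
      rw [ih i (by rw [SimpleGraph.Walk.length_cons] at hi; omega) hh']
      rfl

lemma cycle_getVert_inj {v : V} (c : G.Walk v v) (hc : c.IsCycle) :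
    ∀ a b, a < c.length → b < c.length → c.getVert a = c.getVert b → a = b := by
  have hn3 := hc.three_le_length
  have hnd := hc.support_nodup
  have hsup := SimpleGraph.Walk.support_eq_cons c
  have hlen : c.support.tail.length = c.length := by
    have h1 := SimpleGraph.Walk.length_support c
    have h2 : c.support.tail.length + 1 = c.support.length := by
      rw [hsup]; rfl
    omega
  have gv : ∀ (a : ℕ) (hh : a < c.support.tail.length),
      c.getVert (a+1) = c.support.tail[a]'hh := by
    intro a hh
    have hs : a + 1 < c.support.length := by
      rw [SimpleGraph.Walk.length_support]; omega
    rw [getVert_support_get c (a+1) (by omega) hs]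
    exact (List.getElem_tail hh).symm
  intro a b ha hb heq
  by_cases a0 : a = 0 <;> by_cases b0 : b = 0
  · omega
  · exfalso
    subst a0
    rw [SimpleGraph.Walk.getVert_zero] at heq
    have e1 := gv (b-1) (by omega)
    rw [show b - 1 + 1 = b by omega] at e1
    have e2 := gv (c.length - 1) (by omega)
    rw [show c.length - 1 + 1 = c.length by omega, SimpleGraph.Walk.getVert_length] at e2
    have e3 : c.support.tail[b-1]'(by omega) = c.support.tail[c.length-1]'(by omega) :=
      (heq.trans e1).symm.trans e2
    have := (List.Nodup.getElem_inj_iff hnd).mp e3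
    omega
  · exfalso
    subst b0
    rw [SimpleGraph.Walk.getVert_zero] at heq
    have e1 := gv (a-1) (by omega)
    rw [show a - 1 + 1 = a by omega] at e1
    have e2 := gv (c.length - 1) (by omega)
    rw [show c.length - 1 + 1 = c.length by omega, SimpleGraph.Walk.getVert_length] at e2
    have e3 : c.support.tail[a-1]'(by omega) = c.support.tail[c.length-1]'(by omega) :=
      (heq.symm.trans e1).symm.trans e2
    have := (List.Nodup.getElem_inj_iff hnd).mp e3
    omega
  · have e1 := gv (a-1) (by omega)
    rw [show a - 1 + 1 = a by omega] at e1
    have e2 := gv (b-1) (by omega)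
    rw [show b - 1 + 1 = b by omega] at e2
    have e3 : c.support.tail[a-1]'(by omega) = c.support.tail[b-1]'(by omega) :=
      (e1.symm.trans heq).trans e2
    have := (List.Nodup.getElem_inj_iff hnd).mp e3
    omega

theorem main_result (T : TrackLayout G 3) (v : V)
    (c : G.Walk v v) (hc : c.IsCycle) :
    (Even c.length → walkDelta T c = 0) ∧
    (Odd c.length → |walkDelta T c| = 3) := by
  classical
  set n := c.length with hn
  have hn3 : 3 ≤ n := hc.three_le_length
  set w : ℕ → V := fun i => c.getVert (i % n) with hw
  have hper : ∀ k, w (k + n) = w k := by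
    intro k
    simp only [hw, Nat.add_mod_right]
  have hwlt : ∀ i, i < n → w i = c.getVert i := by
    intro i hi
    simp only [hw, Nat.mod_eq_of_lt hi]
  have hwsucc : ∀ i, w (i+1) = c.getVert ((i % n) + 1) := by
    intro i
    have hs := succ_mod n i (by omega)
    by_cases h : i % n = n - 1
    · rw [if_pos h] at hs
      have e1 : w (i+1) = c.getVert 0 := by simp only [hw, hs]
      rw [e1, SimpleGraph.Walk.getVert_zero, h]
      rw [show n - 1 + 1 = n by omega, hn]
      exact (SimpleGraph.Walk.getVert_length c).symm
    · rw [if_neg h] at hs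
      simp only [hw, hs]
  have hadj : ∀ i, G.Adj (w i) (w (i+1)) := by
    intro i
    rw [hwsucc i]
    have : w i = c.getVert (i % n) := rfl
    rw [this]
    exact SimpleGraph.Walk.adj_getVert_succ c (Nat.mod_lt _ (by omega))
  have htr : ∀ i, T.track (w i) ≠ T.track (w (i+1)) := fun i => T.indep _ _ (hadj i)
  have hinj : ∀ a b, a < n → b < n → w a = w b → a = b := by
    intro a b ha hb h
    rw [hwlt a ha, hwlt b hb] at h
    exact cycle_getVert_inj c hc a b ha hb h
  have hpi : ∀ p q : V, T.track p = T.track q → T.pos p = T.pos q → p = q :=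
    fun p q => T.pos_inj p q
  have hsym : ∀ a b : ℕ, T.track (w a) = T.track (w b) →
      T.track (w (a+1)) = T.track (w (b+1)) →
      ¬ opp (T.pos (w a)) (T.pos (w b)) (T.pos (w (a+1))) (T.pos (w (b+1))) := by
    intro a b h1 h2 hopp
    rcases hopp with ⟨x1, x2⟩ | ⟨x1, x2⟩
    · exact T.noncross _ _ _ _ (hadj a) (hadj b) h1 h2 x1 x2
    · exact T.noncross _ _ _ _ (hadj b) (hadj a) h1.symm h2.symm x1 x2
  have hsym' : ∀ a b : ℕ, T.track (w a) = T.track (w (b+1)) →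
      T.track (w (a+1)) = T.track (w b) →
      ¬ opp (T.pos (w a)) (T.pos (w (b+1))) (T.pos (w (a+1))) (T.pos (w b)) := by
    intro a b h1 h2 hopp
    rcases hopp with ⟨x1, x2⟩ | ⟨x1, x2⟩
    · exact T.noncross _ _ _ _ (hadj a) (hadj b).symm h1 h2 x1 x2
    · exact T.noncross _ _ _ _ (hadj b).symm (hadj a) h1.symm h2.symm x1 x2
  -- the winding number bound
  have hM := netC_abs_le_one T.track T.pos n w hn3 hper hinj htr hpi hsym hsym'
  set M : ℤ := ∑ k ∈ range n, ((if T.track (w k) = 2 ∧ T.track (w (k+1)) = 0 then (1:ℤ) else 0)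
      - (if T.track (w k) = 0 ∧ T.track (w (k+1)) = 2 then (1:ℤ) else 0)) with hMdef
  -- walkDelta = 3 * M
  have hΔsum : walkDelta T c = ∑ i ∈ range n, trackDelta T (w i) (w (i+1)) := by
    rw [walkDelta_eq_sum T c]
    apply Finset.sum_congr rfl
    intro i hi
    rw [Finset.mem_range] at hi
    rw [hwlt i hi, hwsucc i, Nat.mod_eq_of_lt hi]
  have hΔ3M : walkDelta T c = 3 * M := by
    rw [hΔsum]
    have hterm : ∀ i, trackDelta T (w i) (w (i+1))
        = ((((T.track (w (i+1)) : ℕ)) : ℤ) - (((T.track (w i) : ℕ)) : ℤ))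
          + 3 * ((if T.track (w i) = 2 ∧ T.track (w (i+1)) = 0 then (1:ℤ) else 0)
               - (if T.track (w i) = 0 ∧ T.track (w (i+1)) = 2 then (1:ℤ) else 0)) :=
      fun i => trackDelta_formula T _ _ (htr i)
    rw [Finset.sum_congr rfl (fun i _ => hterm i), Finset.sum_add_distrib]
    have htel : ∑ i ∈ range n, ((((T.track (w (i+1)) : ℕ)) : ℤ) - (((T.track (w i) : ℕ)) : ℤ))
        = 0 := by
      rw [Finset.sum_range_sub (fun i => (((T.track (w i) : ℕ)) : ℤ))]
      have : w n = w 0 := by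
        simp only [hw, Nat.mod_self, Nat.zero_mod]
      rw [this]
      ring
    rw [htel, ← Finset.mul_sum, ← hMdef]
    ring
  -- parity
  have hparity : Even (walkDelta T c - n) := by
    have : walkDelta T c - n = ∑ i ∈ range n, (trackDelta T (w i) (w (i+1)) - 1) := by
      rw [Finset.sum_sub_distrib, ← hΔsum]
      simp [Finset.card_range]
    rw [this]
    apply Finset.sum_induction _ Even (fun a b => Even.add) (Even.zero)
    intro i _
    rcases trackDelta_pm T (w i) (w (i+1)) with h | h <;> rw [h] <;> decide
  constructor
  · intro heven
    have hev : Even (walkDelta T c) := by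
      have : walkDelta T c = (walkDelta T c - n) + n := by ring
      rw [this]
      exact hparity.add (by exact_mod_cast heven.natCast)
    rw [hΔ3M] at hev ⊢
    have hMeven : Even M := by
      rcases Int.even_mul.mp hev with h | h
      · exact absurd h (by decide)
      · exact h
    obtain ⟨r, hr⟩ := hMeven
    have := abs_le.mp hM
    have : M = 0 := by omega
    rw [this]; ring
  · intro hodd
    have hod : Odd (walkDelta T c) := by
      have heq : walkDelta T c = (walkDelta T c - n) + n := by ring
      rw [heq]
      have hOn : Odd (n : ℤ) := by exact_mod_cast hodd
      exact hparity.add_odd hOn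
    rw [hΔ3M] at hod ⊢
    have hMne : M ≠ 0 := by
      intro h0
      rw [h0] at hod
      norm_num at hod
    have := abs_le.mp hM
    have : M = 1 ∨ M = -1 := by omega
    rcases this with h | h <;> rw [h] <;> decide

end TrackProof

/-- In any 3-track layout, for any cyclically oriented cycle `C`, the sum of `δ`
over the arcs of `C` is `0` if `C` is even and has absolute value `3` if `C` is odd. -/
theorem stmt0 (G : SimpleGraph V) (T : TrackLayout G 3) (v : V)
    (c : G.Walk v v) (hc : c.IsCycle) :
    (Even c.length → walkDelta T c = 0) ∧
    (Odd c.length → |walkDelta T c| = 3) :=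
  TrackProof.main_result T v c hc
end

section
/- For every h ≥ 0, the graph obtained from the complete binary tree of height h by adding one universal vertex adjacent to all tree vertices has layered pathwidth Ω(h); in particular, the family of tree-apex graphs has unbounded layered pathwidth. -/
open SimpleGraph

universe u

variable {V : Type u}

section Aux

open SimpleGraph

/-- A walk from a vertex in bag `i` to a vertex in bag `k` passes through bag `j`
for any `i ≤ j ≤ k`. -/
lemma walk_hits_bag {G : SimpleGraph V} (P : PathDecomp G) :
    ∀ {x z : V} (W : G.Walk x z) (i j k : ℕ), i ≤ j → j ≤ k →
      x ∈ P.bags i → z ∈ P.bags k → ∃ w ∈ W.support, w ∈ P.bags j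
  | x, _, .nil, i, j, k, hij, hjk, hx, hz =>
    ⟨x, by simp, P.contiguous x i j k hij hjk hx hz⟩
  | x, z, .cons hadj p, i, j, k, hij, hjk, hx, hz => by
    obtain ⟨m, hum, hbm⟩ := P.edge_bag _ _ hadj
    by_cases hmj : j ≤ m
    · exact ⟨x, by simp, P.contiguous x i j m hij hmj hx hum⟩
    · obtain ⟨w, hw, hwb⟩ := walk_hits_bag P p m j k (le_of_not_ge hmj) hjk hbm hz
      exact ⟨w, by simp [hw], hwb⟩

/-- The vertex type of the complete binary tree is finite. -/
instance (h : ℕ) : Finite {l : List Bool // l.length ≤ h} :=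
  (List.finite_length_le Bool h).to_subtype

instance (h : ℕ) : Finite (Option {l : List Bool // l.length ≤ h}) :=
  Finite.of_equiv ({l : List Bool // l.length ≤ h} ⊕ (PUnit : Type))
    (Equiv.optionEquivSumPUnit.{0,0} _).symm

/-- Descendant set of a binary string `s` inside the apexed complete binary tree. -/
def descSet (h : ℕ) (s : List Bool) : Set (Option {l : List Bool // l.length ≤ h}) :=
  {v | ∃ (t : List Bool) (ht : t.length ≤ h), v = some ⟨t, ht⟩ ∧ s <+: t}

/-- A walk going up from a node to any of its ancestors, staying between them. -/
lemma upWalk (h : ℕ) :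
    ∀ (n : ℕ) (l : List Bool) (hl : l.length ≤ h) (s : List Bool) (hs : s.length ≤ h),
      s <+: l → l.length = s.length + n →
      ∃ W : (apexGraph (completeBinaryTree h)).Walk (some ⟨l, hl⟩) (some ⟨s, hs⟩),
        ∀ v ∈ W.support, ∃ (t : List Bool) (ht : t.length ≤ h),
          v = some ⟨t, ht⟩ ∧ s <+: t ∧ t <+: l := by
  intro n
  induction n with
  | zero =>
    intro l hl s hs hpre hlen
    have : s = l := hpre.eq_of_length (by omega)
    subst this
    refine ⟨.nil, ?_⟩
    intro v hv
    rw [SimpleGraph.Walk.support_nil, List.mem_singleton] at hv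
    subst hv
    exact ⟨s, hl, rfl, List.prefix_refl _, List.prefix_refl _⟩
  | succ n ih =>
    intro l hl s hs hpre hlen
    have hne : l ≠ [] := by rintro rfl; simp at hlen
    have hdl : l.dropLast <+: l := List.dropLast_prefix l
    have hdlen : l.dropLast.length = s.length + n := by
      simp [List.length_dropLast]; omega
    have hpre' : s <+: l.dropLast :=
      List.prefix_of_prefix_length_le hpre hdl (by omega)
    have hl' : l.dropLast.length ≤ h := le_trans (by omega) hl
    obtain ⟨W, hW⟩ := ih l.dropLast hl' s hs hpre' hdlen
    have hadj : (apexGraph (completeBinaryTree h)).Adj (some ⟨l, hl⟩) (some ⟨l.dropLast, hl'⟩) :=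
      Or.inl ⟨⟨l, hl⟩, ⟨l.dropLast, hl'⟩, rfl, rfl,
        Or.inr ⟨l.getLast hne, (List.dropLast_concat_getLast hne).symm⟩⟩
    refine ⟨.cons hadj W, ?_⟩
    intro v hv
    rw [SimpleGraph.Walk.support_cons, List.mem_cons] at hv
    rcases hv with rfl | hv
    · exact ⟨l, hl, rfl, hpre, List.prefix_refl _⟩
    · obtain ⟨t, ht, rfl, h1, h2⟩ := hW v hv
      exact ⟨t, ht, rfl, h1, h2.trans hdl⟩

/-- Key step: three disjoint subtrees, one bag must be big. -/
lemma key_step (h : ℕ) (P : PathDecomp (apexGraph (completeBinaryTree h)))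
    (p : ℕ) (s sA sM sB : List Bool)
    (hsA : s <+: sA) (hsM : s <+: sM) (hsB : s <+: sB)
    (hlA : sA.length = s.length + 2) (hlM : sM.length = s.length + 2)
    (hlB : sB.length = s.length + 2)
    (hAM : sA ≠ sM) (hBM : sB ≠ sM)
    (iA iM iB : ℕ) (hAMi : iA ≤ iM) (hMBi : iM ≤ iB)
    (hA : ∃ x ∈ P.bags iA, x ∈ descSet h sA)
    (hB : ∃ z ∈ P.bags iB, z ∈ descSet h sB)
    (hM : p + 1 ≤ {v | v ∈ P.bags iM ∧ v ∈ descSet h sM}.ncard) :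
    p + 2 ≤ {v | v ∈ P.bags iM ∧ v ∈ descSet h s}.ncard := by
  obtain ⟨x, hxB, lx, hlx, rfl, hpx⟩ := hA
  obtain ⟨z, hzB, lz, hlz, rfl, hpz⟩ := hB
  obtain ⟨WA, hWA⟩ := upWalk h (lx.length - s.length) lx hlx s
    (le_trans (hsA.trans hpx).length_le hlx)
    (hsA.trans hpx) (by have := (hsA.trans hpx).length_le; omega)
  obtain ⟨WB, hWB⟩ := upWalk h (lz.length - s.length) lz hlz s
    (le_trans (hsB.trans hpz).length_le hlz)
    (hsB.trans hpz) (by have := (hsB.trans hpz).length_le; omega)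
  obtain ⟨w, hwsup, hwbag⟩ := walk_hits_bag P (WA.append WB.reverse) iA iM iB hAMi hMBi hxB hzB
  -- w is some t with s <+: t and (t <+: lx or t <+: lz)
  have hw : ∃ (t : List Bool) (ht : t.length ≤ h),
      w = some ⟨t, ht⟩ ∧ s <+: t ∧ (t <+: lx ∨ t <+: lz) := by
    rw [SimpleGraph.Walk.support_append] at hwsup
    rcases List.mem_append.mp hwsup with hw | hw
    · obtain ⟨t, ht, e1, e2, e3⟩ := hWA w hw
      exact ⟨t, ht, e1, e2, Or.inl e3⟩
    · have hw' : w ∈ WB.reverse.support := List.mem_of_mem_tail hw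
      rw [SimpleGraph.Walk.support_reverse] at hw'
      obtain ⟨t, ht, e1, e2, e3⟩ := hWB w (List.mem_reverse.mp hw')
      exact ⟨t, ht, e1, e2, Or.inr e3⟩
  obtain ⟨t, ht, rfl, hst, hcase⟩ := hw
  have hwnotM : some (⟨t, ht⟩ : {l : List Bool // l.length ≤ h}) ∉ descSet h sM := by
    rintro ⟨t', ht', he, hMt'⟩
    have htt' : t = t' := by simpa using he
    subst htt'
    rcases hcase with hc | hc
    · exact hAM ((List.prefix_of_prefix_length_le hpx (hMt'.trans hc)
        (by rw [hlA, hlM])).eq_of_length (by rw [hlA, hlM]))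
    · exact hBM ((List.prefix_of_prefix_length_le hpz (hMt'.trans hc)
        (by rw [hlB, hlM])).eq_of_length (by rw [hlB, hlM]))
  have hfin : {v | v ∈ P.bags iM ∧ v ∈ descSet h sM}.Finite := Set.toFinite _
  have hsub : insert (some (⟨t, ht⟩ : {l : List Bool // l.length ≤ h}))
      {v | v ∈ P.bags iM ∧ v ∈ descSet h sM} ⊆ {v | v ∈ P.bags iM ∧ v ∈ descSet h s} := by
    rintro v (rfl | ⟨hv1, t', ht', rfl, hv2⟩)
    · exact ⟨hwbag, t, ht, rfl, hst⟩
    · exact ⟨hv1, t', ht', rfl, hsM.trans hv2⟩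
  calc p + 2 = (p + 1) + 1 := rfl
    _ ≤ {v | v ∈ P.bags iM ∧ v ∈ descSet h sM}.ncard + 1 := by omega
    _ = (insert (some (⟨t, ht⟩ : {l : List Bool // l.length ≤ h}))
          {v | v ∈ P.bags iM ∧ v ∈ descSet h sM}).ncard := by
        rw [Set.ncard_insert_of_notMem (by rintro ⟨_, hm⟩; exact hwnotM hm) hfin]
    _ ≤ _ := Set.ncard_le_ncard hsub (Set.toFinite _)

lemma main_claim (h : ℕ) (P : PathDecomp (apexGraph (completeBinaryTree h))) :
    ∀ (p : ℕ) (s : List Bool), s.length + 2 * p ≤ h →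
      ∃ i, p + 1 ≤ {v | v ∈ P.bags i ∧ v ∈ descSet h s}.ncard := by
  intro p
  induction p with
  | zero =>
    intro s hsh
    have hsl : s.length ≤ h := by omega
    obtain ⟨i, hi⟩ := P.mem_bag (some ⟨s, hsl⟩)
    refine ⟨i, ?_⟩
    have hmem : some (⟨s, hsl⟩ : {l : List Bool // l.length ≤ h}) ∈
        {v | v ∈ P.bags i ∧ v ∈ descSet h s} := ⟨hi, s, hsl, rfl, List.prefix_refl _⟩
    have := Set.ncard_pos (Set.toFinite _) |>.mpr ⟨_, hmem⟩
    omega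
  | succ p ih =>
    intro s hsh
    set s1 := s ++ [false, false] with hs1
    set s2 := s ++ [false, true] with hs2
    set s3 := s ++ [true, false] with hs3
    have hl1 : s1.length = s.length + 2 := by simp [hs1]
    have hl2 : s2.length = s.length + 2 := by simp [hs2]
    have hl3 : s3.length = s.length + 2 := by simp [hs3]
    obtain ⟨i1, hi1⟩ := ih s1 (by omega)
    obtain ⟨i2, hi2⟩ := ih s2 (by omega)
    obtain ⟨i3, hi3⟩ := ih s3 (by omega)
    have hne12 : s1 ≠ s2 := by simp [hs1, hs2]
    have hne13 : s1 ≠ s3 := by simp [hs1, hs3]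
    have hne23 : s2 ≠ s3 := by simp [hs2, hs3]
    have hp1 : s <+: s1 := ⟨_, rfl⟩
    have hp2 : s <+: s2 := ⟨_, rfl⟩
    have hp3 : s <+: s3 := ⟨_, rfl⟩
    have hD1 : ∃ x ∈ P.bags i1, x ∈ descSet h s1 := by
      have h0 : {v | v ∈ P.bags i1 ∧ v ∈ descSet h s1}.Nonempty := by
        rw [← Set.ncard_pos (Set.toFinite _)]; omega
      obtain ⟨x, hx1, hx2⟩ := h0; exact ⟨x, hx1, hx2⟩
    have hD2 : ∃ x ∈ P.bags i2, x ∈ descSet h s2 := by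
      have h0 : {v | v ∈ P.bags i2 ∧ v ∈ descSet h s2}.Nonempty := by
        rw [← Set.ncard_pos (Set.toFinite _)]; omega
      obtain ⟨x, hx1, hx2⟩ := h0; exact ⟨x, hx1, hx2⟩
    have hD3 : ∃ x ∈ P.bags i3, x ∈ descSet h s3 := by
      have h0 : {v | v ∈ P.bags i3 ∧ v ∈ descSet h s3}.Nonempty := by
        rw [← Set.ncard_pos (Set.toFinite _)]; omega
      obtain ⟨x, hx1, hx2⟩ := h0; exact ⟨x, hx1, hx2⟩
    rcases le_total i1 i2 with h12 | h12 <;> rcases le_total i2 i3 with h23 | h23 <;>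
      rcases le_total i1 i3 with h13 | h13
    · exact ⟨i2, key_step h P p s s1 s2 s3 hp1 hp2 hp3 hl1 hl2 hl3 hne12 (Ne.symm hne23)
        i1 i2 i3 h12 h23 hD1 hD3 hi2⟩
    · exact ⟨i2, key_step h P p s s1 s2 s3 hp1 hp2 hp3 hl1 hl2 hl3 hne12 (Ne.symm hne23)
        i1 i2 i3 h12 h23 hD1 hD3 hi2⟩
    · exact ⟨i3, key_step h P p s s1 s3 s2 hp1 hp3 hp2 hl1 hl3 hl2 hne13 hne23
        i1 i3 i2 h13 h23 hD1 hD2 hi3⟩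
    · exact ⟨i1, key_step h P p s s3 s1 s2 hp3 hp1 hp2 hl3 hl1 hl2 (Ne.symm hne13) (Ne.symm hne12)
        i3 i1 i2 h13 h12 hD3 hD2 hi1⟩
    · exact ⟨i1, key_step h P p s s2 s1 s3 hp2 hp1 hp3 hl2 hl1 hl3 (Ne.symm hne12) (Ne.symm hne13)
        i2 i1 i3 h12 h13 hD2 hD3 hi1⟩
    · exact ⟨i3, key_step h P p s s2 s3 s1 hp2 hp3 hp1 hl2 hl3 hl1 hne23 hne13
        i2 i3 i1 h23 h13 hD2 hD1 hi3⟩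
    · exact ⟨i2, key_step h P p s s3 s2 s1 hp3 hp2 hp1 hl3 hl2 hl1 (Ne.symm hne23) hne12
        i3 i2 i1 h23 h12 hD3 hD1 hi2⟩
    · exact ⟨i2, key_step h P p s s3 s2 s1 hp3 hp2 hp1 hl3 hl2 hl1 (Ne.symm hne23) hne12
        i3 i2 i1 h23 h12 hD3 hD1 hi2⟩

/-- Any witness for layered pathwidth of the apexed binary tree of height `h` satisfies `h ≤ 6k`. -/
lemma lpwLE_bound (h k : ℕ) (hle : LayeredPathwidthLE (apexGraph (completeBinaryTree h)) k) :
    h ≤ 6 * k := by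
  obtain ⟨P, lev, hlay, hk⟩ := hle
  obtain ⟨i, hi⟩ := main_claim h P (h / 2) [] (by simp; omega)
  set L := lev none with hL
  -- every vertex has level in {L-1, L, L+1}
  have hlev : ∀ v, v ∈ P.bags i → lev v = L - 1 ∨ lev v = L ∨ lev v = L + 1 := by
    intro v _
    match v with
    | none => exact Or.inr (Or.inl rfl)
    | some a =>
      have hadj : (apexGraph (completeBinaryTree h)).Adj (some a) none :=
        Or.inr (Or.inr ⟨rfl, a, rfl⟩)
      have := hlay _ _ hadj
      rw [abs_le] at this
      omega
  have hsub : {v | v ∈ P.bags i ∧ v ∈ descSet h []} ⊆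
      {v | v ∈ P.bags i ∧ lev v = L - 1} ∪ {v | v ∈ P.bags i ∧ lev v = L} ∪
      {v | v ∈ P.bags i ∧ lev v = L + 1} := by
    rintro v ⟨hv, -⟩
    rcases hlev v hv with h' | h' | h'
    · exact Or.inl (Or.inl ⟨hv, h'⟩)
    · exact Or.inl (Or.inr ⟨hv, h'⟩)
    · exact Or.inr ⟨hv, h'⟩
  have hcard : {v | v ∈ P.bags i ∧ v ∈ descSet h []}.ncard ≤ 3 * k := by
    calc {v | v ∈ P.bags i ∧ v ∈ descSet h []}.ncard
        ≤ ({v | v ∈ P.bags i ∧ lev v = L - 1} ∪ {v | v ∈ P.bags i ∧ lev v = L} ∪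
           {v | v ∈ P.bags i ∧ lev v = L + 1}).ncard :=
          Set.ncard_le_ncard hsub (Set.toFinite _)
      _ ≤ ({v | v ∈ P.bags i ∧ lev v = L - 1} ∪ {v | v ∈ P.bags i ∧ lev v = L}).ncard +
           {v | v ∈ P.bags i ∧ lev v = L + 1}.ncard := Set.ncard_union_le _ _
      _ ≤ {v | v ∈ P.bags i ∧ lev v = L - 1}.ncard + {v | v ∈ P.bags i ∧ lev v = L}.ncard +
           {v | v ∈ P.bags i ∧ lev v = L + 1}.ncard := by
          have := Set.ncard_union_le {v | v ∈ P.bags i ∧ lev v = L - 1}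
            {v | v ∈ P.bags i ∧ lev v = L}
          omega
      _ ≤ k + k + k := by
          have h1 := hk i (L - 1); have h2 := hk i L; have h3 := hk i (L + 1); omega
      _ = 3 * k := by ring
  omega

/-- The set of valid layered pathwidth bounds is nonempty. -/
lemma lpw_nonempty (h : ℕ) :
    LayeredPathwidthLE (apexGraph (completeBinaryTree h))
      (Nat.card (Option {l : List Bool // l.length ≤ h})) := by
  refine ⟨⟨fun _ => Set.univ, fun v => ⟨0, trivial⟩, fun _ _ _ _ _ _ _ _ => trivial,
    fun u v _ => ⟨0, trivial, trivial⟩⟩, fun _ => 0, fun u v _ => by simp, ?_⟩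
  intro i l
  calc {v | v ∈ Set.univ ∧ (0 : ℤ) = l}.ncard ≤ (Set.univ :
        Set (Option {l : List Bool // l.length ≤ h})).ncard :=
      Set.ncard_le_ncard (fun v hv => trivial) Set.finite_univ
    _ = Nat.card (Option {l : List Bool // l.length ≤ h}) := Set.ncard_univ _

end Aux

/-- The apex of the complete binary tree of height `h` has layered pathwidth `Ω(h)`;
in particular, tree-apex graphs have unbounded layered pathwidth. -/
theorem stmt11 :
    (∃ c : ℝ, 0 < c ∧ ∀ h : ℕ,
        c * h ≤ (layeredPathwidth (apexGraph (completeBinaryTree h)) : ℝ)) ∧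
    (∀ k : ℕ, ∃ h : ℕ,
        ¬ LayeredPathwidthLE (apexGraph (completeBinaryTree h)) k) := by
  constructor
  · refine ⟨1/6, by norm_num, fun h => ?_⟩
    have hne : {k | LayeredPathwidthLE (apexGraph (completeBinaryTree h)) k}.Nonempty :=
      ⟨_, lpw_nonempty h⟩
    have hmem := Nat.sInf_mem hne
    have hb := lpwLE_bound h _ hmem
    rw [layeredPathwidth]
    have : (h : ℝ) ≤ 6 * (sInf {k | LayeredPathwidthLE (apexGraph (completeBinaryTree h)) k}) := by
      exact_mod_cast hb
    linarith
  · intro k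
    refine ⟨6 * k + 1, fun hle => ?_⟩
    have := lpwLE_bound (6 * k + 1) k hle
    omega
end
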